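/- arXiv:2202.04463 — 5 statements merged into one kernel-verified Lean document; each statement's English description precedes it below -/
import Mathlib

section
/- Let I ⊆ Σ and suppose w ∈ W_I satisfies w(I) = −I (as subsets of V). Then the map −w (i.e. x ↦ −w(x)) restricts to a permutation of the finite set I, and the dimension of the eigenspace of w for the eigenvalue −1 equals the number of orbits of this permutation of I. -/
/-- Let `I ⊆ Σ` and suppose `w ∈ W_I` satisfies `w(I) = −I` (as subsets of `V`). Then the map
`−w` (i.e. `x ↦ −w(x)`) restricts to a permutation of the finite set `I`, and the dimension
of the eigenspace of `w` for the eigenvalue `−1` equals the number of orbits of this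
permutation of `I`. -/
theorem stmt0
    -- `V` is a finite-dimensional real inner product space
    (V : Type*) [NormedAddCommGroup V] [InnerProductSpace ℝ V] [FiniteDimensional ℝ V]
    -- `Φ` is a finite reduced root system in `V`
    (Φ : Set V) (hΦfin : Φ.Finite)
    (hΦspan : Submodule.span ℝ Φ = ⊤)
    (hΦ0 : (0 : V) ∉ Φ)
    (hΦred : ∀ α ∈ Φ, ∀ t : ℝ, t • α ∈ Φ → t = 1 ∨ t = -1)
    (hΦrefl : ∀ α ∈ Φ, (fun x => (Submodule.reflection (ℝ ∙ α)ᗮ) x) '' Φ = Φ)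
    -- `Σ` (written `S`) is a base of `Φ`: a basis of `V` such that every root is a linear
    -- combination of `S` with coefficients all `≥ 0` or all `≤ 0`
    (S : Set V) (hSΦ : S ⊆ Φ)
    (b : Module.Basis S ℝ V) (hb : ∀ i : S, b i = (i : V))
    (hbase : ∀ β ∈ Φ, (∀ i, 0 ≤ b.repr β i) ∨ (∀ i, b.repr β i ≤ 0))
    -- `I ⊆ S`, and `w` is an element of the subgroup `W_I` generated by the reflections
    -- `s_α` for `α ∈ I`
    (I : Set V) (hIS : I ⊆ S)
    (w : V ≃ₗᵢ[ℝ] V)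
    (hw : w ∈ Subgroup.closure
      { u : V ≃ₗᵢ[ℝ] V | ∃ α ∈ I, u = Submodule.reflection (ℝ ∙ α)ᗮ })
    -- `w(I) = -I` as subsets of `V`
    (hwI : (fun x => w x) '' I = -I) :
    -- then `-w` restricts to a permutation of `I`, and for any permutation `σ` of `I`
    -- agreeing with `-w`, the dimension of the `(-1)`-eigenspace of `w` equals the number
    -- of orbits of `σ` on `I`
    (∀ α ∈ I, -(w α) ∈ I) ∧
      ∀ σ : Equiv.Perm I, (∀ α : I, ((σ α : V)) = -(w α)) →
        Module.finrank ℝ (Module.End.eigenspace (w.toLinearEquiv : V →ₗ[ℝ] V) (-1)) =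
          Nat.card (MulAction.orbitRel.Quotient (Subgroup.zpowers σ) I) := by
  classical
  have hneg : ∀ α ∈ I, -(w α) ∈ I := by
    intro α hα
    have h1 : w α ∈ -I := by
      rw [← hwI]; exact Set.mem_image_of_mem _ hα
    rwa [Set.mem_neg] at h1
  refine ⟨hneg, fun σ hσ => ?_⟩
  haveI : Fintype S := FiniteDimensional.fintypeBasisIndex b
  haveI : Fintype I := ((Set.toFinite S).subset hIS).fintype
  set M : Submodule ℝ V := Submodule.span ℝ I with hMdef
  -- `w` maps `M` into itself
  have hwM : ∀ y ∈ M, w y ∈ M := by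
    intro y hy
    induction hy using Submodule.span_induction with
    | mem α hα =>
        have h2 : -(w α) ∈ I := hneg α hα
        have h3 : w α = -(-(w α)) := (neg_neg _).symm
        rw [h3]
        exact M.neg_mem (Submodule.subset_span h2)
    | zero => simpa using M.zero_mem
    | add a c _ _ ha hc => rw [map_add]; exact M.add_mem ha hc
    | smul t a _ ha => rw [map_smul]; exact M.smul_mem t ha
  -- `w` fixes `Mᗮ` pointwise
  have hMperp : ∀ z ∈ Mᗮ, w z = z := by
    intro z hz
    clear hwI hneg hσ hwM
    induction hw using Subgroup.closure_induction with
    | mem u hu =>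
        obtain ⟨α, hα, rfl⟩ := hu
        refine Submodule.reflection_mem_subspace_eq_self ?_
        have hle : (ℝ ∙ α) ≤ M := by
          rw [Submodule.span_singleton_le_iff_mem]
          exact Submodule.subset_span hα
        exact Submodule.orthogonal_le hle hz
    | one => simp
    | mul u v hu hv hu' hv' =>
        have h4 : (u * v) z = u (v z) := by rw [LinearIsometryEquiv.coe_mul]; rfl
        rw [h4, hv', hu']
    | inv u hu hu' =>
        have h5 : u⁻¹ z = u.symm z := by rw [LinearIsometryEquiv.coe_inv]
        rw [h5]
        conv_lhs => rw [← hu']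
        exact u.symm_apply_apply z
  -- membership in the eigenspace
  have hmemE : ∀ x : V,
      x ∈ Module.End.eigenspace (w.toLinearEquiv : V →ₗ[ℝ] V) (-1) ↔ w x = -x := by
    intro x
    rw [Module.End.mem_eigenspace_iff, neg_one_smul]
    exact Iff.rfl
  set E := Module.End.eigenspace (w.toLinearEquiv : V →ₗ[ℝ] V) (-1) with hEdef
  -- the eigenspace is contained in `M`
  have hEM : ∀ x ∈ E, x ∈ M := by
    intro x hx
    have hwx : w x = -x := (hmemE x).1 hx
    set y : V := (M.orthogonalProjectionOnto x : V) with hy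
    have hyM : y ∈ M := (M.orthogonalProjectionOnto x).2
    have hzperp : x - y ∈ Mᗮ := Submodule.sub_starProjection_mem_orthogonal x
    have hyx : y + (x - y) = x := by abel
    have e1 : w y + (x - y) = -x := by
      have h3 : w y + w (x - y) = w x := by rw [← map_add, hyx]
      rw [hMperp _ hzperp] at h3
      rw [h3, hwx]
    have e2 : (x - y) + (x - y) = -(w y + y) := by
      have h6 : (x - y) + (x - y) = (w y + (x - y)) + (x - y) - w y := by abel
      rw [h6, e1]; abel
    have hm1 : (x - y) + (x - y) ∈ M := by
      rw [e2]; exact M.neg_mem (M.add_mem (hwM y hyM) hyM)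
    have hm2 : (x - y) + (x - y) ∈ Mᗮ := Submodule.add_mem _ hzperp hzperp
    have h0 : (x - y) + (x - y) = 0 :=
      inner_self_eq_zero.mp ((Submodule.mem_orthogonal _ _).mp hm2 _ hm1)
    have h2 : (2 : ℝ) • (x - y) = 0 := by rw [two_smul]; exact h0
    have h4 : x - y = 0 := by
      rcases smul_eq_zero.mp h2 with h | h
      · norm_num at h
      · exact h
    have h5 : x = y := sub_eq_zero.mp h4
    rw [h5]; exact hyM
  -- index machinery
  set ι : I → S := fun α => ⟨(α : V), hIS α.2⟩ with hιdef
  have hικ : Function.Injective ι := by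
    intro a c h
    have h' := congrArg Subtype.val h
    exact Subtype.ext h'
  have hbι : ∀ α : I, b (ι α) = (α : V) := fun α => hb (ι α)
  have hli : LinearIndependent ℝ (fun α : I => (α : V)) := by
    have h := b.linearIndependent.comp ι hικ
    have heq : (⇑b ∘ ι) = fun α : I => (α : V) := funext fun α => hbι α
    rwa [heq] at h
  have hwα : ∀ α : I, w (α : V) = -(σ α : V) := fun α => by rw [hσ α, neg_neg]
  -- quotient machinery
  set Q := MulAction.orbitRel.Quotient (Subgroup.zpowers σ) I with hQdef
  haveI : Fintype Q := Quotient.fintype _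
  set π : I → Q := Quotient.mk'' with hπdef
  have hπσ : ∀ α : I, π (σ α) = π α := by
    intro α
    exact Quotient.sound' ⟨⟨σ, Subgroup.mem_zpowers σ⟩, rfl⟩
  set fib : Q → Finset I := fun q => Finset.univ.filter (fun α => π α = q) with hfibdef
  set v : Q → V := fun q => ∑ α ∈ fib q, (α : V) with hvdef
  have hmemfib : ∀ (q : Q) (α : I), α ∈ fib q ↔ π α = q := by
    intro q α
    simp [hfibdef]
  have hσfib : ∀ (q : Q) (α : I), α ∈ fib q ↔ σ α ∈ fib q := by
    intro q α
    rw [hmemfib, hmemfib, hπσ]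
  have hfibsum : ∀ q : Q, ∑ α ∈ fib q, ((σ α : I) : V) = ∑ α ∈ fib q, (α : V) := by
    intro q
    exact Finset.sum_equiv σ (fun α => hσfib q α) (fun α _ => rfl)
  have hvE : ∀ q : Q, v q ∈ E := by
    intro q
    refine (hmemE _).2 ?_
    have h7 : w (v q) = ∑ α ∈ fib q, w (α : V) := map_sum w _ _
    rw [h7]
    simp only [hwα]
    rw [Finset.sum_neg_distrib, hfibsum q]
  -- coordinates of the orbit sums
  have hcoordv : ∀ (q' : Q) (α : I), b.repr (v q') (ι α) = if π α = q' then 1 else 0 := by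
    intro q' α
    have hres : ∀ β : I, b.repr ((β : V)) = Finsupp.single (ι β) (1 : ℝ) := fun β => by
      rw [← hbι β, b.repr_self]
    have h1 : b.repr (v q') = ∑ β ∈ fib q', Finsupp.single (ι β) (1 : ℝ) := by
      rw [hvdef]
      rw [map_sum]
      exact Finset.sum_congr rfl fun β _ => hres β
    rw [h1, Finsupp.finset_sum_apply]
    simp only [Finsupp.single_apply, hικ.eq_iff]
    rw [Finset.sum_ite_eq' (fib q') α (fun _ => (1 : ℝ))]
    rw [if_congr (hmemfib q' α) rfl rfl]
  -- linear independence of the orbit sums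
  have hliv : LinearIndependent ℝ v := by
    rw [Fintype.linearIndependent_iff]
    intro d hd q
    set α : I := Quotient.out q with hαdef
    have hq : π α = q := Quotient.out_eq' q
    have h3 : ∑ q' : Q, d q' * b.repr (v q') (ι α) = 0 := by
      have h := congrArg (fun z => b.repr z (ι α)) hd
      simpa using h
    have h8 : ∑ q' : Q, d q' * (if π α = q' then (1 : ℝ) else 0) = 0 := by
      calc ∑ q' : Q, d q' * (if π α = q' then (1 : ℝ) else 0)
          = ∑ q' : Q, d q' * b.repr (v q') (ι α) :=
            Finset.sum_congr rfl fun q' _ => by rw [hcoordv q' α]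
        _ = 0 := h3
    have h9 : ∑ q' : Q, d q' * (if π α = q' then (1 : ℝ) else 0) = d q := by
      simp [mul_ite, Finset.sum_ite_eq, hq]
      rw [Finset.sum_eq_single q (fun x _ hx => if_neg (Ne.symm hx)) (fun h => absurd (Finset.mem_univ q) h)]
      exact if_pos rfl
    rw [h9] at h8
    exact h8
  -- the orbit sums span the eigenspace
  have hspanv : ∀ x ∈ E, ∃ d : Q → ℝ, ∑ q : Q, d q • v q = x := by
    intro x hx
    have hxM : x ∈ M := hEM x hx
    have hxM' : x ∈ Submodule.span ℝ (Set.range fun α : I => (α : V)) := by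
      rwa [Subtype.range_coe]
    obtain ⟨c, hc⟩ := (Submodule.mem_span_range_iff_exists_fun ℝ).mp hxM'
    have hwx : w x = -x := (hmemE x).1 hx
    have hsum1 : ∑ α : I, c α • ((σ α : I) : V) = x := by
      have h5 : w x = ∑ α : I, c α • w (α : V) := by
        rw [← hc, map_sum]
        exact Finset.sum_congr rfl fun α _ => by rw [map_smul]
      rw [hwx] at h5
      have h6 : ∑ α : I, c α • w (α : V) = -∑ α : I, c α • ((σ α : I) : V) := by
        rw [← Finset.sum_neg_distrib]
        exact Finset.sum_congr rfl fun α _ => by rw [hwα α, smul_neg]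
      rw [h6] at h5
      exact neg_injective h5.symm
    have hsum2 : ∑ β : I, c (σ.symm β) • (β : V) = ∑ β : I, c β • (β : V) := by
      calc ∑ β : I, c (σ.symm β) • (β : V)
          = ∑ α : I, c (σ.symm (σ α)) • ((σ α : I) : V) := (Equiv.sum_comp σ _).symm
        _ = ∑ α : I, c α • ((σ α : I) : V) := by simp
        _ = x := hsum1
        _ = ∑ β : I, c β • (β : V) := hc.symm
    have hcinv : ∀ β : I, c (σ.symm β) = c β := by
      have h7 : ∑ β : I, (c (σ.symm β) - c β) • (β : V) = 0 := by
        simp only [sub_smul]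
        rw [Finset.sum_sub_distrib, hsum2, sub_self]
      intro β
      have h8 := Fintype.linearIndependent_iff.mp hli _ h7 β
      linarith [h8]
    have hcσ : ∀ α : I, c (σ α) = c α := by
      intro α
      have h9 := hcinv (σ α)
      rw [Equiv.symm_apply_apply] at h9
      exact h9.symm
    have hcinv' : ∀ α : I, c (σ⁻¹ α) = c α := by
      intro α
      have h10 := hcσ (σ⁻¹ α)
      rw [← Equiv.Perm.mul_apply, mul_inv_cancel, Equiv.Perm.one_apply] at h10
      exact h10.symm
    have hczpow : ∀ (n : ℤ) (α : I), c ((σ ^ n) α) = c α := by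
      intro n
      induction n using Int.induction_on with
      | zero => intro α; simp
      | succ n ih =>
          intro α
          rw [zpow_add_one, Equiv.Perm.mul_apply, ih (σ α), hcσ]
      | pred n ih =>
          intro α
          rw [zpow_sub_one, Equiv.Perm.mul_apply, ih (σ⁻¹ α), hcinv']
    have horbc : ∀ a c' : I, (MulAction.orbitRel (Subgroup.zpowers σ) I).r a c' → c a = c c' := by
      intro a c' hac
      obtain ⟨g, hg⟩ := hac
      obtain ⟨n, hn⟩ := Subgroup.mem_zpowers_iff.mp g.2
      have ha : (σ ^ n) c' = a := by
        rw [hn]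
        simpa [Subgroup.smul_def, Equiv.Perm.smul_def] using hg
      rw [← ha, hczpow n c']
    have hCα : ∀ α : I, c α = c (Quotient.out (π α)) := by
      intro α
      have h8 : π (Quotient.out (π α)) = π α := Quotient.out_eq' _
      have h9 : (MulAction.orbitRel (Subgroup.zpowers σ) I).r (Quotient.out (π α)) α :=
        Quotient.eq''.mp h8
      exact (horbc _ _ h9).symm
    refine ⟨fun q => c (Quotient.out q), ?_⟩
    rw [← hc, ← Finset.sum_fiberwise Finset.univ π (fun α : I => c α • (α : V))]
    refine Finset.sum_congr rfl fun q _ => ?_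
    have hfq : (Finset.univ.filter fun α : I => π α = q) = fib q := by
      rw [hfibdef]
    rw [hfq]
    have hterm : ∀ α ∈ fib q, c α • (α : V) = c (Quotient.out q) • (α : V) := by
      intro α hα
      have hπα : π α = q := (hmemfib q α).1 hα
      rw [hCα α, hπα]
    rw [Finset.sum_congr rfl hterm, ← Finset.smul_sum]
  -- build a basis of `E` indexed by the orbits
  set v' : Q → E := fun q => ⟨v q, hvE q⟩ with hv'def
  have hliv' : LinearIndependent ℝ v' := by
    refine LinearIndependent.of_comp E.subtype ?_
    have h11 : (E.subtype ∘ v') = v := rfl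
    rwa [h11]
  have hspan' : ⊤ ≤ Submodule.span ℝ (Set.range v') := by
    rintro ⟨x, hx⟩ -
    obtain ⟨d, hd⟩ := hspanv x hx
    refine (Submodule.mem_span_range_iff_exists_fun ℝ).mpr ⟨d, ?_⟩
    apply Subtype.ext
    have h12 : ((∑ q : Q, d q • v' q : E) : V) = ∑ q : Q, d q • v q := by
      simp [hv'def]
    rw [h12]
    exact hd
  have B : Module.Basis Q ℝ E := Module.Basis.mk hliv' hspan'
  rw [Module.finrank_eq_nat_card_basis B]
end

section
/- Suppose w₀ ∈ W satisfies w₀(Σ) = −Σ, that I ⊆ Σ satisfies (−w₀)(I) = I, and that w_I ∈ W_I satisfies w_I(I) = −I. Then w₀ and w_I commute; moreover w₀∘w_I restricts to a permutation of I, −w₀ restricts to a permutation of Σ∖I, and the dimension of the eigenspace of w₀∘w_I for the eigenvalue −1 equals the number of orbits of size at least 2 of w₀∘w_I on I plus the number of orbits of −w₀ on Σ∖I. -/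
set_option linter.unusedSectionVars false
set_option linter.unusedTactic false

open Module MulAction

section Helpers

variable {V : Type*} [NormedAddCommGroup V] [InnerProductSpace ℝ V] [FiniteDimensional ℝ V]

local notation "⟪" x ", " y "⟫" => @inner ℝ _ _ x y

noncomputable def rf (α : V) : V ≃ₗᵢ[ℝ] V := Submodule.reflection (ℝ ∙ α)ᗮ

lemma rf_apply (α x : V) : rf α x = x - (2 * (⟪α, x⟫ / ⟪α, α⟫)) • α := by
  show Submodule.reflection (ℝ ∙ α)ᗮ x = x - (2 * (⟪α, x⟫ / ⟪α, α⟫)) • α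
  rw [Submodule.reflection_orthogonal_apply, Submodule.reflection_singleton_apply, real_inner_self_eq_norm_sq,
    neg_sub, ← Nat.cast_smul_eq_nsmul ℝ 2, smul_smul]
  norm_num

lemma rf_neg (α : V) : rf (-α) = rf α := by
  ext x
  rw [rf_apply, rf_apply, inner_neg_left, inner_neg_left, inner_neg_right, smul_neg, neg_neg]
  ring_nf
  rw [neg_smul, neg_neg]

lemma rf_self (α : V) : rf α α = -α := Submodule.reflection_orthogonalComplement_singleton_eq_neg α

lemma rf_invol (α x : V) : rf α (rf α x) = x := Submodule.reflection_reflection _ _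

lemma rf_mul_self (α : V) : rf α * rf α = 1 := Submodule.reflection_mul_reflection _

lemma rf_inv (α : V) : (rf α)⁻¹ = rf α := Submodule.reflection_inv

lemma rf_conj (u : V ≃ₗᵢ[ℝ] V) (α x : V) : rf (u α) x = u (rf α (u.symm x)) := by
  rw [rf_apply, rf_apply, map_sub, map_smul, u.apply_symm_apply,
    LinearIsometryEquiv.inner_map_map]
  congr 2
  rw [← u.inner_map_map α (u.symm x), u.apply_symm_apply]

lemma rf_conj' (u : V ≃ₗᵢ[ℝ] V) (α : V) : rf (u α) = u * rf α * u⁻¹ := by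
  ext x
  rw [rf_conj]
  rfl

noncomputable def wP (l : List V) : V ≃ₗᵢ[ℝ] V := (l.map rf).prod

lemma wP_nil : wP ([] : List V) = 1 := rfl

lemma wP_cons (a : V) (l : List V) : wP (a :: l) = rf a * wP l := by
  simp [wP]

lemma wP_append (l₁ l₂ : List V) : wP (l₁ ++ l₂) = wP l₁ * wP l₂ := by
  simp [wP]

lemma wP_apply_cons (a : V) (l : List V) (x : V) : wP (a :: l) x = rf a (wP l x) := by
  rw [wP_cons]; rfl

lemma wP_reverse (l : List V) : (wP l)⁻¹ = wP l.reverse := by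
  induction l with
  | nil => simp [wP_nil]
  | cons a l ih =>
      rw [wP_cons, mul_inv_rev, rf_inv, ih, List.reverse_cons, wP_append,
        show wP [a] = rf a by rw [wP_cons, wP_nil, mul_one]]

lemma wP_conj (u : V ≃ₗᵢ[ℝ] V) (l : List V) :
    u * wP l * u⁻¹ = wP (l.map (fun α => -(u α))) := by
  induction l with
  | nil => simp [wP_nil]
  | cons a l ih =>
      rw [List.map_cons, wP_cons, wP_cons, ← ih, rf_neg, rf_conj']
      group

lemma wP_conj_rf (l : List V) (α : V) : rf (wP l α) = wP l * rf α * (wP l)⁻¹ := by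
  have := rf_conj' (wP l) α
  exact this


-- ROOT SYSTEM SECTION

variable {Φ S : Set V} {b : Basis S ℝ V}

def Pos (b : Basis S ℝ V) (β : V) : Prop := ∀ i, 0 ≤ b.repr β i

lemma rf_mem (hΦrefl : ∀ α ∈ Φ, (fun x => (Submodule.reflection (ℝ ∙ α)ᗮ) x) '' Φ = Φ)
    {α x : V} (hα : α ∈ Φ) (hx : x ∈ Φ) : rf α x ∈ Φ := by
  rw [← hΦrefl α hα]; exact ⟨x, hx, rfl⟩

lemma neg_mem_Phi (hΦrefl : ∀ α ∈ Φ, (fun x => (Submodule.reflection (ℝ ∙ α)ᗮ) x) '' Φ = Φ)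
    {y : V} (hy : y ∈ Φ) : -y ∈ Φ := by
  have h := rf_mem hΦrefl hy hy
  rwa [rf_self] at h

lemma wP_mem (hΦrefl : ∀ α ∈ Φ, (fun x => (Submodule.reflection (ℝ ∙ α)ᗮ) x) '' Φ = Φ)
    {l : List V} (hl : ∀ γ ∈ l, γ ∈ Φ) {x : V} (hx : x ∈ Φ) : wP l x ∈ Φ := by
  induction l with
  | nil => exact hx
  | cons a t ih =>
      rw [wP_apply_cons]
      exact rf_mem hΦrefl (hl a List.mem_cons_self)
        (ih (fun γ hγ => hl γ (List.mem_cons_of_mem a hγ)))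

lemma not_pos_and_neg (hΦ0 : (0:V) ∉ Φ) {β : V} (hβ : β ∈ Φ) (h1 : Pos b β)
    (h2 : ∀ i, b.repr β i ≤ 0) : False := by
  have hz : b.repr β = 0 := Finsupp.ext fun i => le_antisymm (h2 i) (h1 i)
  have : β = 0 := by
    have := b.repr.map_eq_zero_iff.mp hz
    exact this
  exact hΦ0 (this ▸ hβ)

lemma pos_simple (hb : ∀ i : S, b i = (i : V)) {γ : V} (hγ : γ ∈ S) : Pos b γ := by
  classical
  intro i
  let j : S := ⟨γ, hγ⟩
  have h : b.repr (b j) = Finsupp.single j 1 := b.repr_self j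
  have h2 : b j = γ := hb j
  rw [h2] at h
  rw [DFunLike.congr_fun h i, Finsupp.single_apply]
  split <;> norm_num

lemma neg_simple (hb : ∀ i : S, b i = (i : V)) {γ : V} (hγ : γ ∈ S) :
    ∀ i, b.repr (-γ) i ≤ 0 := by
  intro i
  rw [map_neg, Finsupp.neg_apply, neg_nonpos]
  exact pos_simple hb hγ i

lemma refl_simple_pos (hSΦ : S ⊆ Φ) (hΦ0 : (0:V) ∉ Φ)
    (hΦred : ∀ α ∈ Φ, ∀ t : ℝ, t • α ∈ Φ → t = 1 ∨ t = -1)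
    (hΦrefl : ∀ α ∈ Φ, (fun x => (Submodule.reflection (ℝ ∙ α)ᗮ) x) '' Φ = Φ)
    (hb : ∀ i : S, b i = (i : V))
    (hbase : ∀ β ∈ Φ, (∀ i, 0 ≤ b.repr β i) ∨ (∀ i, b.repr β i ≤ 0))
    {α β : V} (hα : α ∈ S) (hβ : β ∈ Φ) (hpos : Pos b β) (hne : β ≠ α) :
    Pos b (rf α β) := by
  classical
  set i₀ : S := ⟨α, hα⟩ with hi₀
  have hreprα : b.repr α = Finsupp.single i₀ 1 := by
    rw [show α = b i₀ from (hb i₀).symm, Basis.repr_self]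
  have hrfΦ : rf α β ∈ Φ := rf_mem hΦrefl (hSΦ hα) hβ
  have hex : ∃ j : S, j ≠ i₀ ∧ 0 < b.repr β j := by
    by_contra h
    push_neg at h
    have hz : ∀ j, j ≠ i₀ → b.repr β j = 0 := fun j hj => le_antisymm (h j hj) (hpos j)
    set t := b.repr β i₀ with ht
    have hβt : β = t • α := by
      apply b.repr.injective
      rw [map_smul, hreprα]
      ext j
      by_cases hj : j = i₀
      · subst hj; simp [← ht]
      · rw [hz j hj]
        simp [Finsupp.single_apply, Ne.symm hj]
    rcases hΦred α (hSΦ hα) t (hβt ▸ hβ) with h1 | h1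
    · exact hne (by rw [hβt, h1, one_smul])
    · have hh := hpos i₀
      rw [← ht, h1] at hh
      linarith
  obtain ⟨j, hji, hjpos⟩ := hex
  have hco : b.repr (rf α β) j = b.repr β j := by
    rw [rf_apply, map_sub, map_smul, Finsupp.sub_apply, Finsupp.smul_apply, hreprα,
      Finsupp.single_apply, if_neg (fun hc : i₀ = j => hji hc.symm)]
    simp
  rcases hbase _ hrfΦ with h | h
  · exact h
  · exfalso
    have := h j
    rw [hco] at this
    linarith

lemma signchange (hSΦ : S ⊆ Φ) (hΦ0 : (0:V) ∉ Φ)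
    (hΦred : ∀ α ∈ Φ, ∀ t : ℝ, t • α ∈ Φ → t = 1 ∨ t = -1)
    (hΦrefl : ∀ α ∈ Φ, (fun x => (Submodule.reflection (ℝ ∙ α)ᗮ) x) '' Φ = Φ)
    (hb : ∀ i : S, b i = (i : V))
    (hbase : ∀ β ∈ Φ, (∀ i, 0 ≤ b.repr β i) ∨ (∀ i, b.repr β i ≤ 0)) :
    ∀ t : List V, (∀ γ ∈ t, γ ∈ S) → ∀ x, x ∈ Φ → (∀ i, b.repr x i ≤ 0) →
      Pos b (wP t x) → ∃ t₁ γ t₂, t = t₁ ++ γ :: t₂ ∧ wP t₂ x = -γ := by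
  intro t
  induction t with
  | nil =>
      intro _ x hx hneg hpos
      exact absurd hneg (fun hn => not_pos_and_neg hΦ0 hx hpos hn)
  | cons a t ih =>
      intro hmem x hx hneg hpos
      have ha : a ∈ S := hmem a List.mem_cons_self
      by_cases hp : Pos b (wP t x)
      · obtain ⟨t₁, γ, t₂, heq, hγ⟩ :=
          ih (fun γ hγ => hmem γ (List.mem_cons_of_mem a hγ)) x hx hneg hp
        exact ⟨a :: t₁, γ, t₂, by rw [heq, List.cons_append], hγ⟩
      · have hwtΦ : wP t x ∈ Φ :=
          wP_mem hΦrefl (fun γ hγ => hSΦ (hmem γ (List.mem_cons_of_mem a hγ))) hx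
        have hneg' : ∀ i, b.repr (wP t x) i ≤ 0 := (hbase _ hwtΦ).resolve_left hp
        have hposcons : Pos b (rf a (wP t x)) := by
          rw [← wP_apply_cons]; exact hpos
        have hkey : wP t x = -a := by
          by_contra hne'
          have hmemneg : -(wP t x) ∈ Φ := neg_mem_Phi hΦrefl hwtΦ
          have hposneg : Pos b (-(wP t x)) := by
            intro i
            rw [map_neg, Finsupp.neg_apply, neg_nonneg]
            exact hneg' i
          have hnea : -(wP t x) ≠ a := fun hc => hne' (by rw [← hc, neg_neg])
          have h2 : Pos b (rf a (-(wP t x))) :=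
            refl_simple_pos hSΦ hΦ0 hΦred hΦrefl hb hbase ha hmemneg hposneg hnea
          have h3 : rf a (-(wP t x)) = -(rf a (wP t x)) := map_neg _ _
          apply not_pos_and_neg hΦ0 (rf_mem hΦrefl (hSΦ ha) hwtΦ) hposcons
          intro i
          have := h2 i
          rw [h3, map_neg, Finsupp.neg_apply] at this
          linarith
        exact ⟨[], a, t, by rw [List.nil_append], hkey⟩

lemma core (hSΦ : S ⊆ Φ) (hΦ0 : (0:V) ∉ Φ)
    (hΦred : ∀ α ∈ Φ, ∀ t : ℝ, t • α ∈ Φ → t = 1 ∨ t = -1)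
    (hΦrefl : ∀ α ∈ Φ, (fun x => (Submodule.reflection (ℝ ∙ α)ᗮ) x) '' Φ = Φ)
    (hb : ∀ i : S, b i = (i : V))
    (hbase : ∀ β ∈ Φ, (∀ i, 0 ≤ b.repr β i) ∨ (∀ i, b.repr β i ≤ 0)) :
    ∀ n (l : List V), l.length ≤ n → (∀ γ ∈ l, γ ∈ S) →
      (∀ γ ∈ l, Pos b (wP l γ)) → ∀ x, wP l x = x := by
  intro n
  induction n with
  | zero =>
      intro l hlen _ _ x
      rw [List.length_eq_zero_iff.mp (Nat.le_zero.mp hlen)]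
      rfl
  | succ n ih =>
      intro l hlen hmem hpos x
      rcases List.eq_nil_or_concat l with rfl | ⟨t, a, hl⟩
      · rfl
      · rw [List.concat_eq_append] at hl
        subst hl
        have ha : a ∈ S := hmem a (by simp)
        have hposa : Pos b (wP (t ++ [a]) a) := hpos a (by simp)
        have hsingle : wP [a] a = -a := by
          have h := rf_self a
          rw [wP_apply_cons, wP_nil]
          simpa using h
        have h1 : wP (t ++ [a]) a = wP t (-a) := by
          rw [wP_append, LinearIsometryEquiv.coe_mul, Function.comp_apply, hsingle]
        obtain ⟨t₁, γ, t₂, ht, hkey⟩ :=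
          signchange hSΦ hΦ0 hΦred hΦrefl hb hbase t
            (fun γ hγ => hmem γ (by simp [hγ]))
            (-a) (neg_mem_Phi hΦrefl (hSΦ ha)) (neg_simple hb ha) (h1 ▸ hposa)
        have hconj : rf γ = wP t₂ * rf a * (wP t₂)⁻¹ := by
          have h := wP_conj_rf t₂ (-a)
          rw [hkey] at h
          simp only [rf_neg] at h
          exact h
        have e1 : rf γ * wP t₂ * rf a = wP t₂ := by
          rw [hconj, inv_mul_cancel_right, mul_assoc, rf_mul_self, mul_one]
        have hrw : wP (t ++ [a]) = wP (t₁ ++ t₂) := by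
          rw [ht, wP_append, wP_append, wP_append, wP_cons,
            show wP [a] = rf a from by rw [wP_cons, wP_nil, mul_one]]
          calc wP t₁ * (rf γ * wP t₂) * rf a = wP t₁ * (rf γ * wP t₂ * rf a) := by group
            _ = wP t₁ * wP t₂ := by rw [e1]
        have hlen' : (t₁ ++ t₂).length ≤ n := by
          have h2 := congrArg List.length ht
          simp only [List.length_append, List.length_cons] at h2 ⊢
          simp only [List.length_append, List.length_cons] at hlen
          omega
        have hmem' : ∀ γ' ∈ t₁ ++ t₂, γ' ∈ S := by
          intro γ' hγ'
          apply hmem γ'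
          rcases List.mem_append.mp hγ' with h' | h'
          · exact List.mem_append.mpr (Or.inl (ht ▸ List.mem_append.mpr (Or.inl h')))
          · exact List.mem_append.mpr (Or.inl (ht ▸ List.mem_append.mpr
              (Or.inr (List.mem_cons_of_mem γ h'))))
        have hpos' : ∀ γ' ∈ t₁ ++ t₂, Pos b (wP (t₁ ++ t₂) γ') := by
          intro γ' hγ'
          rw [← hrw]
          exact hpos γ' (by
            rcases List.mem_append.mp hγ' with h' | h'
            · exact List.mem_append.mpr (Or.inl (ht ▸ List.mem_append.mpr (Or.inl h')))
            · exact List.mem_append.mpr (Or.inl (ht ▸ List.mem_append.mpr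
                (Or.inr (List.mem_cons_of_mem γ h')))))
        rw [hrw]
        exact ih (t₁ ++ t₂) hlen' hmem' hpos' x

lemma closure_list {J : Set V} {u : V ≃ₗᵢ[ℝ] V}
    (hu : u ∈ Subgroup.closure {u : V ≃ₗᵢ[ℝ] V | ∃ α ∈ J, u = Submodule.reflection (ℝ ∙ α)ᗮ}) :
    ∃ l : List V, (∀ γ ∈ l, γ ∈ J) ∧ wP l = u := by
  induction hu using Subgroup.closure_induction with
  | mem u hu =>
      obtain ⟨α, hα, rfl⟩ := hu
      exact ⟨[α], by simp [hα], by rw [wP_cons, wP_nil, mul_one]; rfl⟩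
  | one => exact ⟨[], by simp, rfl⟩
  | mul u v _ _ ihu ihv =>
      obtain ⟨l₁, h₁, rfl⟩ := ihu
      obtain ⟨l₂, h₂, rfl⟩ := ihv
      exact ⟨l₁ ++ l₂, fun γ hγ => (List.mem_append.mp hγ).elim (h₁ γ) (h₂ γ), wP_append l₁ l₂⟩
  | inv u _ ih =>
      obtain ⟨l, h, rfl⟩ := ih
      exact ⟨l.reverse, fun γ hγ => h γ (List.mem_reverse.mp hγ), (wP_reverse l).symm⟩

end Helpers


section Counting

lemma invol_finrank {W : Type*} [AddCommGroup W] [Module ℝ W] [FiniteDimensional ℝ W]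
    (g : W →ₗ[ℝ] W) (hg : g ∘ₗ g = LinearMap.id) :
    2 * (finrank ℝ (Module.End.eigenspace g (-1)) : ℝ)
      = finrank ℝ W - LinearMap.trace ℝ W g := by
  classical
  set p : W →ₗ[ℝ] W := (2⁻¹ : ℝ) • (LinearMap.id - g) with hp
  have hgg : ∀ x, g (g x) = x := fun x => by
    have h := DFunLike.congr_fun hg x; simpa using h
  have hpx : ∀ x, p x = (2⁻¹ : ℝ) • (x - g x) := fun x => by
    simp [hp, LinearMap.sub_apply]
  have hproj : LinearMap.IsProj (Module.End.eigenspace g (-1)) p := by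
    constructor
    · intro x
      rw [Module.End.mem_eigenspace_iff, hpx, map_smul, map_sub, hgg x]
      rw [neg_smul, one_smul, ← smul_neg, neg_sub]
    · intro x hx
      rw [Module.End.mem_eigenspace_iff] at hx
      rw [hpx, hx]
      rw [neg_smul, one_smul, sub_neg_eq_add]
      rw [← two_smul ℝ x, smul_smul]
      norm_num
  have htr : LinearMap.trace ℝ W p = (finrank ℝ (Module.End.eigenspace g (-1)) : ℝ) :=
    hproj.trace
  have htr2 : LinearMap.trace ℝ W p
      = (2⁻¹ : ℝ) * ((finrank ℝ W : ℝ) - LinearMap.trace ℝ W g) := by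
    rw [hp, map_smul, map_sub, LinearMap.trace_id, smul_eq_mul]
  rw [htr] at htr2
  linarith

end Counting

section Counting2

lemma trace_perm {W ι : Type*} [Fintype ι] [DecidableEq ι] [AddCommGroup W] [Module ℝ W]
    (c : Basis ι ℝ W) (g : W →ₗ[ℝ] W) (π : Equiv.Perm ι) (ε : ℝ)
    (hg : ∀ i, g (c i) = ε • c (π i)) :
    LinearMap.trace ℝ W g = ε * (Fintype.card {i // π i = i}) := by
  classical
  rw [LinearMap.trace_eq_matrix_trace ℝ c, Matrix.trace]
  have hdiag : ∀ i, ((LinearMap.toMatrix c c) g).diag i = if π i = i then ε else 0 := by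
    intro i
    rw [Matrix.diag_apply, LinearMap.toMatrix_apply, hg i, map_smul, Finsupp.smul_apply,
      c.repr_self, Finsupp.single_apply]
    by_cases h : π i = i <;> simp [h]
  rw [Finset.sum_congr rfl (fun i _ => hdiag i), Finset.sum_ite, Finset.sum_const_zero,
    add_zero, Finset.sum_const, Fintype.card_subtype, nsmul_eq_mul]
  ring

lemma dim_perm_neg {W ι : Type*} [Fintype ι] [DecidableEq ι] [AddCommGroup W] [Module ℝ W]
    (c : Basis ι ℝ W) (g : W →ₗ[ℝ] W) (π : Equiv.Perm ι)
    (hπ : ∀ i, π (π i) = i) (hg : ∀ i, g (c i) = -(c (π i))) :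
    2 * finrank ℝ (Module.End.eigenspace g (-1))
      = Fintype.card ι + Fintype.card {i // π i = i} := by
  have hfin : Module.Finite ℝ W := Module.Finite.of_basis c
  have hg2 : g ∘ₗ g = LinearMap.id := c.ext fun i => by
    simp [hg, hπ i]
  have h1 := invol_finrank g hg2
  have h2 : LinearMap.trace ℝ W g = (-1) * (Fintype.card {i // π i = i}) :=
    trace_perm c g π (-1) (fun i => by rw [hg i, neg_smul, one_smul])
  have h3 : (finrank ℝ W : ℝ) = Fintype.card ι := by
    rw [finrank_eq_card_basis c]
  have h4 : (2 * finrank ℝ (Module.End.eigenspace g (-1)) : ℝ)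
      = ((Fintype.card ι + Fintype.card {i // π i = i} : ℕ) : ℝ) := by
    push_cast
    linarith
  exact_mod_cast h4

lemma dim_perm_pos {W ι : Type*} [Fintype ι] [DecidableEq ι] [AddCommGroup W] [Module ℝ W]
    (c : Basis ι ℝ W) (g : W →ₗ[ℝ] W) (π : Equiv.Perm ι)
    (hπ : ∀ i, π (π i) = i) (hg : ∀ i, g (c i) = c (π i)) :
    2 * finrank ℝ (Module.End.eigenspace g (-1)) + Fintype.card {i // π i = i}
      = Fintype.card ι := by
  have hfin : Module.Finite ℝ W := Module.Finite.of_basis c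
  have hg2 : g ∘ₗ g = LinearMap.id := c.ext fun i => by
    simp [hg, hπ i]
  have h1 := invol_finrank g hg2
  have h2 : LinearMap.trace ℝ W g = 1 * (Fintype.card {i // π i = i}) :=
    trace_perm c g π 1 (fun i => by rw [hg i, one_smul])
  have h3 : (finrank ℝ W : ℝ) = Fintype.card ι := by
    rw [finrank_eq_card_basis c]
  have h4 : ((2 * finrank ℝ (Module.End.eigenspace g (-1))
      + Fintype.card {i // π i = i} : ℕ) : ℝ) = ((Fintype.card ι : ℕ) : ℝ) := by
    push_cast
    linarith
  exact_mod_cast h4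

end Counting2

section Orbits
open MulAction

variable {X : Type*} (π : Equiv.Perm X)

lemma zpow_invol (hπ : ∀ x, π (π x) = x) : ∀ k : ℤ, π ^ k = 1 ∨ π ^ k = π := by
  have h2 : π * π = 1 := Equiv.ext fun y => by
    simp [Equiv.Perm.mul_apply, hπ y]
  intro k
  rcases Int.even_or_odd k with ⟨m, hm⟩ | ⟨m, hm⟩
  · left
    rw [hm, show m + m = 2 * m by ring, zpow_mul, zpow_two, h2, one_zpow]
  · right
    rw [hm, zpow_add, zpow_one, zpow_mul, zpow_two, h2, one_zpow, one_mul]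

lemma orbit_pair (hπ : ∀ x, π (π x) = x) (x : X) :
    MulAction.orbit (Subgroup.zpowers π) x = {x, π x} := by
  ext y
  constructor
  · rintro ⟨⟨g, hg⟩, rfl⟩
    obtain ⟨k, rfl⟩ := Subgroup.mem_zpowers_iff.mp hg
    have hs : (⟨π ^ k, hg⟩ : Subgroup.zpowers π) • x = (π ^ k) x := rfl
    simp only [Set.mem_insert_iff, Set.mem_singleton_iff]
    rcases zpow_invol π hπ k with h | h
    · left
      show (⟨π ^ k, hg⟩ : Subgroup.zpowers π) • x = x
      rw [hs, h]
      rfl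
    · right
      show (⟨π ^ k, hg⟩ : Subgroup.zpowers π) • x = π x
      rw [hs, h]
  · rintro (rfl | h)
    · exact mem_orbit_self y
    · rw [Set.mem_singleton_iff] at h
      rw [h]
      exact ⟨⟨π, Subgroup.mem_zpowers π⟩, rfl⟩

lemma fixed_out (hπ : ∀ x, π (π x) = x) {x : X} (hx : π x = x) :
    (Quotient.mk'' x : orbitRel.Quotient (Subgroup.zpowers π) X).out = x := by
  have h1 : (Quotient.mk'' ((Quotient.mk'' x : orbitRel.Quotient (Subgroup.zpowers π) X).out)
      : orbitRel.Quotient (Subgroup.zpowers π) X) = Quotient.mk'' x :=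
    Quotient.out_eq' _
  have h2 := Quotient.eq''.mp h1
  rw [orbitRel_apply, orbit_pair π hπ] at h2
  rcases h2 with h | h
  · exact h
  · rw [Set.mem_singleton_iff] at h
    rw [h, hx]

open scoped Classical in
lemma card_orbit_q [Finite X] (hπ : ∀ x, π (π x) = x)
    (q : orbitRel.Quotient (Subgroup.zpowers π) X) :
    Nat.card q.orbit = if π q.out = q.out then 1 else 2 := by
  rw [orbitRel.Quotient.orbit_eq_orbit_out q Quotient.out_eq', orbit_pair π hπ,
    Nat.card_coe_set_eq]
  by_cases h : π q.out = q.out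
  · rw [if_pos h, h, Set.pair_eq_singleton, Set.ncard_singleton]
  · rw [if_neg h, Set.ncard_pair (Ne.symm h)]

lemma orb_counts [Finite X] (hπ : ∀ x, π (π x) = x) :
    2 * Nat.card {q : orbitRel.Quotient (Subgroup.zpowers π) X // 2 ≤ Nat.card q.orbit}
      + Nat.card {x // π x = x} = Nat.card X ∧
    2 * Nat.card (orbitRel.Quotient (Subgroup.zpowers π) X)
      = Nat.card X + Nat.card {x // π x = x} := by
  classical
  letI : Fintype X := Fintype.ofFinite X
  letI : Fintype (orbitRel.Quotient (Subgroup.zpowers π) X) := Fintype.ofFinite _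
  set Q := orbitRel.Quotient (Subgroup.zpowers π) X with hQ
  letI : ∀ q : Q, Fintype q.orbit := fun q => Fintype.ofFinite _
  have hsum : Nat.card X = ∑ q : Q, Nat.card q.orbit := by
    rw [Nat.card_congr (selfEquivSigmaOrbits' (Subgroup.zpowers π) X),
      Nat.card_eq_fintype_card, Fintype.card_sigma]
    exact Finset.sum_congr rfl fun q _ => (Nat.card_eq_fintype_card).symm
  have hsum2 : Nat.card X
      = ∑ q : Q, (if π q.out = q.out then 1 else 2) := by
    rw [hsum]
    exact Finset.sum_congr rfl fun q _ => card_orbit_q π hπ q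
  have hsplit : Nat.card X
      = (Finset.univ.filter (fun q : Q => π q.out = q.out)).card
        + 2 * (Finset.univ.filter (fun q : Q => ¬ π q.out = q.out)).card := by
    rw [hsum2, Finset.sum_ite, Finset.sum_const, Finset.sum_const, smul_eq_mul,
      smul_eq_mul, mul_one, mul_comm]
  have hfix : Nat.card {x // π x = x}
      = (Finset.univ.filter (fun q : Q => π q.out = q.out)).card := by
    rw [← Fintype.card_subtype, Nat.card_eq_fintype_card]
    apply Fintype.card_congr
    exact {
      toFun := fun x => ⟨Quotient.mk'' x.1, by
        rw [fixed_out π hπ x.2]; exact x.2⟩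
      invFun := fun q => ⟨q.1.out, q.2⟩
      left_inv := fun x => Subtype.ext (fixed_out π hπ x.2)
      right_inv := fun q => Subtype.ext (Quotient.out_eq' q.1) }
  have hbig : Nat.card {q : Q // 2 ≤ Nat.card q.orbit}
      = (Finset.univ.filter (fun q : Q => ¬ π q.out = q.out)).card := by
    rw [← Fintype.card_subtype, Nat.card_eq_fintype_card]
    apply Fintype.card_congr
    apply Equiv.subtypeEquivRight
    intro q
    rw [card_orbit_q π hπ q]
    by_cases h : π q.out = q.out <;> simp [h]
  have hQcard : Nat.card Q
      = (Finset.univ.filter (fun q : Q => π q.out = q.out)).card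
        + (Finset.univ.filter (fun q : Q => ¬ π q.out = q.out)).card := by
    rw [Nat.card_eq_fintype_card, ← Finset.card_univ]
    exact (Finset.card_filter_add_card_filter_not (fun q : Q => π q.out = q.out)).symm
  constructor
  · rw [hbig, hfix, hsplit]; ring
  · rw [hQcard, hfix, hsplit]; ring

end Orbits


section Split

variable {V : Type*} [NormedAddCommGroup V] [InnerProductSpace ℝ V] [FiniteDimensional ℝ V]

lemma split_eig (g : V →ₗ[ℝ] V) (U : Submodule ℝ V)
    (hgU : ∀ x ∈ U, g x ∈ U) (hgUp : ∀ x ∈ Uᗮ, g x ∈ Uᗮ) :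
    finrank ℝ (Module.End.eigenspace g (-1))
      = finrank ℝ ((Module.End.eigenspace g (-1)) ⊓ U : Submodule ℝ V)
        + finrank ℝ ((Module.End.eigenspace g (-1)) ⊓ Uᗮ : Submodule ℝ V) := by
  set E := Module.End.eigenspace g (-1) with hE
  have hsup : (E ⊓ U) ⊔ (E ⊓ Uᗮ) = E := by
    apply le_antisymm
    · exact sup_le inf_le_left inf_le_left
    · intro x hx
      have hxmem : x ∈ U ⊔ Uᗮ := by
        rw [Submodule.sup_orthogonal_of_hasOrthogonalProjection]; trivial
      obtain ⟨a, ha, c, hc, rfl⟩ := Submodule.mem_sup.mp hxmem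
      have hgx : g (a + c) = -(a + c) := by
        have h := (Module.End.mem_eigenspace_iff).mp hx
        rwa [neg_smul, one_smul] at h
      have hsumeq : g a + g c = -a + -c := by
        rw [← map_add, hgx]; abel
      have heq : g a - (-a) = (-c) - g c := by
        have h2 : (g a - (-a)) - ((-c) - g c) = (g a + g c) - (-a + -c) := by abel
        rw [hsumeq, sub_self] at h2
        exact sub_eq_zero.mp h2
      have hmem1 : g a - (-a) ∈ U := sub_mem (hgU a ha) (neg_mem ha)
      have hmem2 : (-c) - g c ∈ Uᗮ := sub_mem (neg_mem hc) (hgUp c hc)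
      have hz : g a - (-a) = 0 := by
        have hm : g a - (-a) ∈ U ⊓ Uᗮ := ⟨hmem1, heq ▸ hmem2⟩
        rw [Submodule.inf_orthogonal_eq_bot] at hm
        exact hm
      have hz2 : (-c) - g c = 0 := heq ▸ hz
      have haE : a ∈ E := by
        rw [hE, Module.End.mem_eigenspace_iff, neg_smul, one_smul]
        exact sub_eq_zero.mp hz
      have hcE : c ∈ E := by
        rw [hE, Module.End.mem_eigenspace_iff, neg_smul, one_smul]
        exact (sub_eq_zero.mp hz2).symm
      exact Submodule.mem_sup.mpr ⟨a, ⟨haE, ha⟩, c, ⟨hcE, hc⟩, rfl⟩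
  have hdisj : (E ⊓ U) ⊓ (E ⊓ Uᗮ) = ⊥ := by
    apply le_bot_iff.mp
    intro x hx
    have hm : x ∈ U ⊓ Uᗮ := ⟨hx.1.2, hx.2.2⟩
    rw [Submodule.inf_orthogonal_eq_bot] at hm
    exact hm
  have h := Submodule.finrank_sup_add_finrank_inf_eq (E ⊓ U) (E ⊓ Uᗮ)
  rw [hsup, hdisj] at h
  simp only [finrank_bot, add_zero] at h
  exact h

lemma finrank_inf_restrict (g : V →ₗ[ℝ] V) (U : Submodule ℝ V) (hgU : ∀ x ∈ U, g x ∈ U) :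
    finrank ℝ (Module.End.eigenspace (g.restrict hgU) (-1))
      = finrank ℝ ((Module.End.eigenspace g (-1)) ⊓ U : Submodule ℝ V) := by
  have hEeq : Module.End.eigenspace (g.restrict hgU) (-1)
      = Submodule.comap U.subtype ((Module.End.eigenspace g (-1)) ⊓ U) := by
    ext x
    rw [Module.End.mem_eigenspace_iff, Submodule.mem_comap, Submodule.mem_inf,
      Module.End.mem_eigenspace_iff]
    constructor
    · intro h
      refine ⟨?_, x.2⟩
      have h2 := congrArg Subtype.val h
      rw [LinearMap.restrict_coe_apply] at h2
      simpa using h2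
    · rintro ⟨h, -⟩
      apply Subtype.ext
      rw [LinearMap.restrict_coe_apply]
      simpa using h
  rw [hEeq]
  exact LinearEquiv.finrank_eq (Submodule.comapSubtypeEquivOfLe inf_le_right)

lemma card_split {A B : Set V} (hBA : B ⊆ A) (hfin : A.Finite) (P : V → Prop) :
    Nat.card {x : A // P ↑x} = Nat.card {x : B // P ↑x} + Nat.card {x : ↥(A\B) // P ↑x} := by
  classical
  haveI := hfin.to_subtype
  haveI := (hfin.subset hBA).to_subtype
  haveI := (hfin.subset (Set.diff_subset : A \ B ⊆ A)).to_subtype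
  rw [← Nat.card_sum]
  apply Nat.card_congr
  exact {
    toFun := fun x => if h : (x.1 : V) ∈ B then Sum.inl ⟨⟨x.1, h⟩, x.2⟩
      else Sum.inr ⟨⟨x.1, ⟨x.1.2, h⟩⟩, x.2⟩
    invFun := fun y => y.elim (fun u => ⟨⟨u.1.1, hBA u.1.2⟩, u.2⟩) (fun u => ⟨⟨u.1.1, u.1.2.1⟩, u.2⟩)
    left_inv := fun x => by
      by_cases h : (x.1 : V) ∈ B <;> simp [h]
    right_inv := fun y => by
      rcases y with u | u
      · simp [u.1.2]
      · simp [u.1.2.2] }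

end Split

/-- Suppose `w₀ ∈ W` satisfies `w₀(Σ) = −Σ`, that `I ⊆ Σ` satisfies `(−w₀)(I) = I`, and that
`w_I ∈ W_I` satisfies `w_I(I) = −I`. Then `w₀` and `w_I` commute; moreover `w₀ ∘ w_I`
restricts to a permutation of `I`, `−w₀` restricts to a permutation of `Σ ∖ I`, and the
dimension of the eigenspace of `w₀ ∘ w_I` for the eigenvalue `−1` equals the number of
orbits of size at least 2 of `w₀ ∘ w_I` on `I` plus the number of orbits of `−w₀` on
`Σ ∖ I`. -/
theorem stmt1
    -- `V` is a finite-dimensional real inner product space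
    (V : Type*) [NormedAddCommGroup V] [InnerProductSpace ℝ V] [FiniteDimensional ℝ V]
    -- `Φ` is a finite reduced root system in `V`
    (Φ : Set V) (hΦfin : Φ.Finite)
    (hΦspan : Submodule.span ℝ Φ = ⊤)
    (hΦ0 : (0 : V) ∉ Φ)
    (hΦred : ∀ α ∈ Φ, ∀ t : ℝ, t • α ∈ Φ → t = 1 ∨ t = -1)
    (hΦrefl : ∀ α ∈ Φ, (fun x => (Submodule.reflection (ℝ ∙ α)ᗮ) x) '' Φ = Φ)
    -- `Σ` (written `S`) is a base of `Φ`
    (S : Set V) (hSΦ : S ⊆ Φ)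
    (b : Module.Basis S ℝ V) (hb : ∀ i : S, b i = (i : V))
    (hbase : ∀ β ∈ Φ, (∀ i, 0 ≤ b.repr β i) ∨ (∀ i, b.repr β i ≤ 0))
    -- `w₀ ∈ W = W_Σ` satisfies `w₀(Σ) = -Σ`
    (w₀ : V ≃ₗᵢ[ℝ] V)
    (hw₀W : w₀ ∈ Subgroup.closure
      { u : V ≃ₗᵢ[ℝ] V | ∃ α ∈ S, u = Submodule.reflection (ℝ ∙ α)ᗮ })
    (hw₀S : (fun x => w₀ x) '' S = -S)
    -- `I ⊆ S` satisfies `(-w₀)(I) = I`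
    (I : Set V) (hIS : I ⊆ S)
    (hI : (fun x => -(w₀ x)) '' I = I)
    -- `w_I ∈ W_I` satisfies `w_I(I) = -I`
    (wI : V ≃ₗᵢ[ℝ] V)
    (hwIW : wI ∈ Subgroup.closure
      { u : V ≃ₗᵢ[ℝ] V | ∃ α ∈ I, u = Submodule.reflection (ℝ ∙ α)ᗮ })
    (hwII : (fun x => wI x) '' I = -I) :
    -- `w₀` and `w_I` commute
    (∀ x : V, w₀ (wI x) = wI (w₀ x)) ∧
    -- `w₀ ∘ w_I` restricts to a permutation of `I`
    (∀ α ∈ I, w₀ (wI α) ∈ I) ∧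
    -- `-w₀` restricts to a permutation of `Σ ∖ I`
    (∀ β ∈ S \ I, -(w₀ β) ∈ S \ I) ∧
    -- the dimension formula, for any permutations `σ` of `I` and `τ` of `S ∖ I`
    -- agreeing with `w₀ ∘ w_I` and `-w₀` respectively
    (∀ (σ : Equiv.Perm I) (τ : Equiv.Perm ↥(S \ I)),
      (∀ α : I, ((σ α : V)) = w₀ (wI α)) →
      (∀ β : ↥(S \ I), ((τ β : V)) = -(w₀ β)) →
      Module.finrank ℝ (Module.End.eigenspace
          ((w₀.toLinearEquiv : V →ₗ[ℝ] V) ∘ₗ (wI.toLinearEquiv : V →ₗ[ℝ] V)) (-1)) =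
        Nat.card {q : MulAction.orbitRel.Quotient (Subgroup.zpowers σ) I //
            2 ≤ Nat.card q.orbit} +
          Nat.card (MulAction.orbitRel.Quotient (Subgroup.zpowers τ) ↥(S \ I))) := by
  classical
  -- lists of simple reflections
  obtain ⟨l₀, hl₀S, hl₀⟩ := closure_list hw₀W
  obtain ⟨lI, hlII, hlI⟩ := closure_list hwIW
  -- membership facts
  have hw₀neg : ∀ γ ∈ S, -(w₀ γ) ∈ S := by
    intro γ hγ
    have h : w₀ γ ∈ -S := by rw [← hw₀S]; exact ⟨γ, hγ, rfl⟩
    rwa [Set.mem_neg] at h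
  have hwIneg : ∀ γ ∈ I, -(wI γ) ∈ I := by
    intro γ hγ
    have h : wI γ ∈ -I := by rw [← hwII]; exact ⟨γ, hγ, rfl⟩
    rwa [Set.mem_neg] at h
  have hIneg : ∀ γ ∈ I, -(w₀ γ) ∈ I := by
    intro γ hγ
    rw [← hI]
    exact ⟨γ, hγ, rfl⟩
  -- w₀ squared is the identity
  have hw₀2 : ∀ x, w₀ (w₀ x) = x := by
    have hmem : ∀ γ ∈ l₀ ++ l₀, γ ∈ S :=
      fun γ hγ => hl₀S γ ((List.mem_append.mp hγ).elim id id)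
    have happ : ∀ x, wP (l₀ ++ l₀) x = w₀ (w₀ x) := by
      intro x
      rw [wP_append, hl₀, LinearIsometryEquiv.coe_mul, Function.comp_apply]
    have hcore := core hSΦ hΦ0 hΦred hΦrefl hb hbase (l₀ ++ l₀).length (l₀ ++ l₀) le_rfl
      hmem (by
        intro γ hγ
        rw [happ]
        have hγS : γ ∈ S := hmem γ hγ
        have h3 : -(w₀ (-(w₀ γ))) ∈ S := hw₀neg _ (hw₀neg γ hγS)
        rw [map_neg, neg_neg] at h3
        exact pos_simple hb h3)
    intro x
    have h := hcore x
    rwa [happ] at h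
  -- wI squared is the identity
  have hwI2 : ∀ x, wI (wI x) = x := by
    have hmem : ∀ γ ∈ lI ++ lI, γ ∈ I :=
      fun γ hγ => hlII γ ((List.mem_append.mp hγ).elim id id)
    have happ : ∀ x, wP (lI ++ lI) x = wI (wI x) := by
      intro x
      rw [wP_append, hlI, LinearIsometryEquiv.coe_mul, Function.comp_apply]
    have hcore := core hSΦ hΦ0 hΦred hΦrefl hb hbase (lI ++ lI).length (lI ++ lI) le_rfl
      (fun γ hγ => hIS (hmem γ hγ)) (by
        intro γ hγ
        rw [happ]
        have hγI : γ ∈ I := hmem γ hγ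
        have h3 : -(wI (-(wI γ))) ∈ I := hwIneg _ (hwIneg γ hγI)
        rw [map_neg, neg_neg] at h3
        exact pos_simple hb (hIS h3))
    intro x
    have h := hcore x
    rwa [happ] at h
  have hw₀inv : ∀ x, w₀⁻¹ x = w₀ x := by
    intro x
    apply w₀.injective
    have h1 : w₀ (w₀⁻¹ x) = x := w₀.apply_symm_apply x
    rw [h1, hw₀2]
  have hwIinv : ∀ x, wI⁻¹ x = wI x := by
    intro x
    apply wI.injective
    have h1 : wI (wI⁻¹ x) = x := wI.apply_symm_apply x
    rw [h1, hwI2]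
  -- commutation
  have hcomm : ∀ x : V, w₀ (wI x) = wI (w₀ x) := by
    set l₂ := lI.map (fun α => -(w₀ α)) with hl₂
    have hconj : w₀ * wI * w₀⁻¹ = wP l₂ := by rw [← hlI, wP_conj]
    set lu := lI.reverse ++ l₂ with hlu
    have hu : wP lu = wI⁻¹ * (w₀ * wI * w₀⁻¹) := by
      rw [hlu, wP_append, ← wP_reverse, hlI, hconj]
    have hmemu : ∀ γ ∈ lu, γ ∈ I := by
      intro γ hγ
      rcases List.mem_append.mp hγ with h | h
      · exact hlII γ (List.mem_reverse.mp h)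
      · obtain ⟨δ, hδ, rfl⟩ := List.mem_map.mp h
        exact hIneg δ (hlII δ hδ)
    have hWIW0 : ∀ y ∈ I, wI (w₀ y) ∈ I := by
      intro y hy
      have h1 : -(wI (-(w₀ y))) ∈ I := hwIneg _ (hIneg y hy)
      rwa [map_neg, neg_neg] at h1
    have hposu : ∀ γ ∈ lu, Pos b (wP lu γ) := by
      intro γ hγ
      have hγI := hmemu γ hγ
      have happly : wP lu γ = wI (w₀ (wI (w₀ γ))) := by
        rw [hu]
        simp only [LinearIsometryEquiv.coe_mul, Function.comp_apply]
        rw [hw₀inv, hwIinv]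
      rw [happly]
      exact pos_simple hb (hIS (hWIW0 _ (hWIW0 γ hγI)))
    have hu1 := core hSΦ hΦ0 hΦred hΦrefl hb hbase lu.length lu le_rfl
      (fun γ hγ => hIS (hmemu γ hγ)) hposu
    intro x
    have h := hu1 (w₀ x)
    rw [hu] at h
    simp only [LinearIsometryEquiv.coe_mul, Function.comp_apply] at h
    rw [hw₀inv, hw₀2, hwIinv] at h
    have h2 := congrArg wI h
    rw [hwI2] at h2
    exact h2
  -- part 2
  have part2 : ∀ α ∈ I, w₀ (wI α) ∈ I := by
    intro α hα
    have h2 : -(w₀ (-(wI α))) ∈ I := hIneg _ (hwIneg α hα)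
    rwa [map_neg, neg_neg] at h2
  -- part 3
  have part3 : ∀ β ∈ S \ I, -(w₀ β) ∈ S \ I := by
    rintro β ⟨hβS, hβI⟩
    refine ⟨hw₀neg β hβS, fun hc => hβI ?_⟩
    have h2 : -(w₀ (-(w₀ β))) ∈ I := hIneg _ hc
    rwa [map_neg, neg_neg, hw₀2] at h2
  refine ⟨hcomm, part2, part3, ?_⟩
  -- PART 4
  intro σ τ hσ hτ
  -- finiteness
  have hSfin : S.Finite := hΦfin.subset hSΦ
  have hIfin : I.Finite := hSfin.subset hIS
  have hSIfin : (S \ I).Finite := hSfin.subset Set.diff_subset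
  haveI := hSfin.to_subtype
  haveI := hIfin.to_subtype
  haveI := hSIfin.to_subtype
  letI : Fintype S := Fintype.ofFinite _
  letI : Fintype I := Fintype.ofFinite _
  letI : Fintype ↥(S \ I) := Fintype.ofFinite _
  set flin : V →ₗ[ℝ] V :=
    ((w₀.toLinearEquiv : V →ₗ[ℝ] V) ∘ₗ (wI.toLinearEquiv : V →ₗ[ℝ] V)) with hflin_def
  set w0l : V →ₗ[ℝ] V := (w₀.toLinearEquiv : V →ₗ[ℝ] V) with hw0l_def
  have hflin : ∀ x, flin x = w₀ (wI x) := fun x => rfl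
  have hw0l : ∀ x, w0l x = w₀ x := fun x => rfl
  have hff : ∀ x, flin (flin x) = x := by
    intro x
    rw [hflin, hflin, ← hcomm (wI x), hwI2, hw₀2]
  set U : Submodule ℝ V := Submodule.span ℝ I with hU
  -- preservation of U
  have hfU : ∀ x ∈ U, flin x ∈ U := by
    have hmap : Submodule.map flin U ≤ U := by
      rw [hU, Submodule.map_span]
      apply Submodule.span_mono
      rintro y ⟨α, hα, rfl⟩
      exact part2 α hα
    exact fun x hx => hmap ⟨x, hx, rfl⟩
  have hw0U : ∀ x ∈ U, w0l x ∈ U := by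
    have hmap : Submodule.map w0l U ≤ U := by
      rw [hU, Submodule.map_span]
      apply Submodule.span_le.mpr
      rintro y ⟨α, hα, rfl⟩
      have h1 : -(w₀ α) ∈ I := hIneg α hα
      have h2 : w0l α = -(-(w₀ α)) := by rw [hw0l, neg_neg]
      rw [h2]
      exact neg_mem (Submodule.subset_span h1)
    exact fun x hx => hmap ⟨x, hx, rfl⟩
  -- preservation of the orthogonal complement
  have hfUp : ∀ x ∈ Uᗮ, flin x ∈ Uᗮ := by
    intro x hx
    rw [Submodule.mem_orthogonal] at hx ⊢
    intro u hu
    calc inner ℝ u (flin x) = inner ℝ (flin (flin u)) (flin x) := by rw [hff]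
      _ = (inner ℝ (flin u) x : ℝ) := by
          rw [hflin, hflin x, LinearIsometryEquiv.inner_map_map, LinearIsometryEquiv.inner_map_map]
      _ = 0 := hx _ (hfU u hu)
  have hw0Up : ∀ x ∈ Uᗮ, w0l x ∈ Uᗮ := by
    intro x hx
    rw [Submodule.mem_orthogonal] at hx ⊢
    intro u hu
    calc inner ℝ u (w0l x) = inner ℝ (w0l (w0l u)) (w0l x) := by
          rw [show w0l (w0l u) = u from by rw [hw0l, hw0l, hw₀2]]
      _ = (inner ℝ (w0l u) x : ℝ) := by rw [hw0l, hw0l x, LinearIsometryEquiv.inner_map_map]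
      _ = 0 := hx _ (hw0U u hu)
  -- wI fixes Uᗮ pointwise
  have hwIfixUp : ∀ x ∈ Uᗮ, wI x = x := by
    have key : ∀ u ∈ Subgroup.closure {u : V ≃ₗᵢ[ℝ] V | ∃ α ∈ I, u = Submodule.reflection (ℝ ∙ α)ᗮ},
        ∀ x ∈ Uᗮ, u x = x := by
      intro u hu
      induction hu using Subgroup.closure_induction with
      | mem u hu =>
          obtain ⟨α, hα, rfl⟩ := hu
          intro x hx
          apply Submodule.reflection_mem_subspace_eq_self
          intro y hy
          obtain ⟨c, rfl⟩ := Submodule.mem_span_singleton.mp hy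
          rw [real_inner_smul_left]
          rw [Submodule.mem_orthogonal] at hx
          rw [hx α (Submodule.subset_span hα), mul_zero]
      | one => intro x hx; rfl
      | mul u v hu hv ihu ihv =>
          intro x hx
          rw [LinearIsometryEquiv.coe_mul, Function.comp_apply, ihv x hx, ihu x hx]
      | inv u hu ih =>
          intro x hx
          have h := ih x hx
          conv_lhs => rw [← h]
          exact u.symm_apply_apply x
    exact key wI hwIW
  -- eigenspaces agree on Uᗮ
  have hEUp : Module.End.eigenspace flin (-1) ⊓ Uᗮ
      = Module.End.eigenspace w0l (-1) ⊓ Uᗮ := by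
    ext x
    simp only [Submodule.mem_inf, Module.End.mem_eigenspace_iff]
    constructor
    · rintro ⟨h1, h2⟩
      refine ⟨?_, h2⟩
      rw [show w0l x = flin x from by rw [hflin, hw0l, hwIfixUp x h2]]
      exact h1
    · rintro ⟨h1, h2⟩
      refine ⟨?_, h2⟩
      rw [show flin x = w0l x from by rw [hflin, hw0l, hwIfixUp x h2]]
      exact h1
  -- basis of U indexed by I
  have hli : LinearIndependent ℝ (fun α : I => (α : V)) := by
    have h := b.linearIndependent
    have hinj : Function.Injective (fun α : I => (⟨α, hIS α.2⟩ : S)) := by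
      intro a a' h'
      simp only [Subtype.mk.injEq] at h'
      exact Subtype.ext h'
    have hcomp := h.comp (fun α : I => (⟨α, hIS α.2⟩ : S)) hinj
    have heq : (fun α : I => (α : V)) = (⇑b ∘ fun α : I => (⟨α, hIS α.2⟩ : S)) := by
      funext α
      rw [Function.comp_apply, hb]
    rw [heq]
    exact hcomp
  have hUrange : Submodule.span ℝ (Set.range (fun α : I => (α : V))) = U := by
    rw [hU, Subtype.range_coe]
  let cI : Basis I ℝ U := (Basis.span hli).map (LinearEquiv.ofEq _ _ hUrange)
  have hcI : ∀ α : I, ((cI α : U) : V) = (α : V) := by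
    intro α
    rw [show cI α = (LinearEquiv.ofEq _ _ hUrange) ((Basis.span hli) α) from Basis.map_apply _ _ _]
    exact congrArg Subtype.val (Basis.span_apply hli α)
  -- involutivity of the permutations
  have hσ2 : ∀ α, σ (σ α) = α := by
    intro α
    apply Subtype.ext
    rw [hσ (σ α), hσ α]
    exact hff (α : V)
  have hτ2 : ∀ β, τ (τ β) = β := by
    intro β
    apply Subtype.ext
    rw [hτ (τ β), hτ β, map_neg, neg_neg, hw₀2]
  let νS : Equiv.Perm S :=
    ⟨fun i => ⟨-(w₀ i), hw₀neg i i.2⟩, fun i => ⟨-(w₀ i), hw₀neg i i.2⟩,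
     fun i => Subtype.ext (by show -(w₀ (-(w₀ (i : V)))) = (i : V); rw [map_neg, neg_neg, hw₀2]),
     fun i => Subtype.ext (by show -(w₀ (-(w₀ (i : V)))) = (i : V); rw [map_neg, neg_neg, hw₀2])⟩
  let νI : Equiv.Perm I :=
    ⟨fun i => ⟨-(w₀ i), hIneg i i.2⟩, fun i => ⟨-(w₀ i), hIneg i i.2⟩,
     fun i => Subtype.ext (by show -(w₀ (-(w₀ (i : V)))) = (i : V); rw [map_neg, neg_neg, hw₀2]),
     fun i => Subtype.ext (by show -(w₀ (-(w₀ (i : V)))) = (i : V); rw [map_neg, neg_neg, hw₀2])⟩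
  have hνS2 : ∀ i, νS (νS i) = i := νS.left_inv
  have hνI2 : ∀ i, νI (νI i) = i := νI.left_inv
  -- restricted endomorphisms act on the basis
  set fres : U →ₗ[ℝ] U := flin.restrict hfU with hfres_def
  set w0res : U →ₗ[ℝ] U := w0l.restrict hw0U with hw0res_def
  have hfres : ∀ α : I, fres (cI α) = cI (σ α) := by
    intro α
    apply Subtype.ext
    rw [hfres_def, LinearMap.restrict_coe_apply, hcI, hcI]
    exact (hσ α).symm
  have hw0res : ∀ α : I, w0res (cI α) = -(cI (νI α)) := by
    intro α
    apply Subtype.ext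
    rw [hw0res_def, LinearMap.restrict_coe_apply, hcI]
    rw [show ((-(cI (νI α)) : U) : V) = -((cI (νI α) : U) : V) from rfl, hcI]
    show w₀ (α : V) = -((νI α : I) : V)
    rw [show ((νI α : I) : V) = -(w₀ (α : V)) from rfl, neg_neg]
  have hbνS : ∀ i : S, w0l (b i) = -(b (νS i)) := by
    intro i
    rw [hb, hb]
    show w₀ (i : V) = -((νS i : S) : V)
    rw [show ((νS i : S) : V) = -(w₀ (i : V)) from rfl, neg_neg]
  -- dimension equations
  have e4 : 2 * Module.finrank ℝ (Module.End.eigenspace fres (-1))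
        + Fintype.card {α : I // σ α = α} = Fintype.card I :=
    dim_perm_pos cI fres σ hσ2 hfres
  have e5 : 2 * Module.finrank ℝ (Module.End.eigenspace w0res (-1))
      = Fintype.card I + Fintype.card {α : I // νI α = α} :=
    dim_perm_neg cI w0res νI hνI2 hw0res
  have e6 : 2 * Module.finrank ℝ (Module.End.eigenspace w0l (-1))
      = Fintype.card S + Fintype.card {i : S // νS i = i} :=
    dim_perm_neg b w0l νS hνS2 hbνS
  have e1 := split_eig flin U hfU hfUp
  have e2 := split_eig w0l U hw0U hw0Up
  have e3 : Module.finrank ℝ ((Module.End.eigenspace flin (-1)) ⊓ Uᗮ : Submodule ℝ V)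
      = Module.finrank ℝ ((Module.End.eigenspace w0l (-1)) ⊓ Uᗮ : Submodule ℝ V) := by
    rw [hEUp]
  have e4' := finrank_inf_restrict flin U hfU
  have e5' := finrank_inf_restrict w0l U hw0U
  -- orbit counts
  have o1 := (orb_counts σ hσ2).1
  have o2 := (orb_counts τ hτ2).2
  -- identify fixed point sets with subsets of V
  have c1 : Nat.card {i : S // νS i = i} = Nat.card {x : S // -(w₀ (x : V)) = (x : V)} :=
    Nat.card_congr (Equiv.subtypeEquivRight fun i =>
      Iff.trans Subtype.ext_iff Iff.rfl)
  have c2 : Nat.card {α : I // νI α = α} = Nat.card {x : I // -(w₀ (x : V)) = (x : V)} :=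
    Nat.card_congr (Equiv.subtypeEquivRight fun i =>
      Iff.trans Subtype.ext_iff Iff.rfl)
  have c3 : Nat.card {β : ↥(S \ I) // τ β = β}
      = Nat.card {x : ↥(S \ I) // -(w₀ (x : V)) = (x : V)} :=
    Nat.card_congr (Equiv.subtypeEquivRight fun i => by
      rw [Subtype.ext_iff, hτ i])
  have csplit := card_split hIS hSfin (fun x => -(w₀ x) = x)
  have csplitT := card_split hIS hSfin (fun _ => True)
  have cS : Nat.card {x : S // True} = Nat.card S :=
    Nat.card_congr (Equiv.subtypeUnivEquiv fun _ => trivial)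
  have cI' : Nat.card {x : I // True} = Nat.card I :=
    Nat.card_congr (Equiv.subtypeUnivEquiv fun _ => trivial)
  have cSI : Nat.card {x : ↥(S \ I) // True} = Nat.card ↥(S \ I) :=
    Nat.card_congr (Equiv.subtypeUnivEquiv fun _ => trivial)
  simp only [← Nat.card_eq_fintype_card] at e4 e5 e6
  rw [← hfres_def] at e4'
  rw [← hw0res_def] at e5'
  beta_reduce at csplit csplitT
  omega
end

section
/- For every permutation u of {0,1,…,2n} with u² = 1 and u∘w₀ = w₀∘u, there exists exactly one pair (k,l) of integers with k,l ≥ 0 and 2k + l ≤ n such that u = g ∘ c_{k,l} ∘ g⁻¹ for some permutation g of {0,1,…,2n} commuting with w₀. -/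
open Finset Equiv
open Fin.NatCast

theorem Equiv.Perm.apply_inv_self {α : Type*} (f : Equiv.Perm α) (x : α) : f (f⁻¹ x) = x :=
  f.apply_symm_apply x

theorem Equiv.Perm.inv_apply_self {α : Type*} (f : Equiv.Perm α) (x : α) : f⁻¹ (f x) = x :=
  f.symm_apply_apply x

lemma prod_range_map_fix {α : Type*} (f : ℕ → Equiv.Perm α) (m : ℕ) (x : α)
    (h : ∀ j < m, f j x = x) :
    (((List.range m).map f).prod) x = x := by
  induction m with
  | zero => simp
  | succ m ih =>
    rw [List.range_succ, List.map_append, List.prod_append]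
    simp only [List.map_cons, List.map_nil, List.prod_cons, List.prod_nil, mul_one,
      Equiv.Perm.mul_apply]
    rw [h m (by omega)]
    exact ih (fun j hj => h j (by omega))

lemma prod_range_map_hit {α : Type*} (f : ℕ → Equiv.Perm α) (m j : ℕ) (x : α) (hj : j < m)
    (h : ∀ i < m, i ≠ j → f i x = x) (h' : ∀ i < m, i ≠ j → f i (f j x) = f j x) :
    (((List.range m).map f).prod) x = f j x := by
  induction m with
  | zero => omega
  | succ m ih =>
    rw [List.range_succ, List.map_append, List.prod_append]
    simp only [List.map_cons, List.map_nil, List.prod_cons, List.prod_nil, mul_one,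
      Equiv.Perm.mul_apply]
    by_cases hjm : j = m
    · subst hjm
      exact prod_range_map_fix f j (f j x) (fun i hi => h' i (by omega) (by omega))
    · rw [h m (by omega) (by omega)]
      exact ih (by omega) (fun i hi hij => h i (by omega) hij)
        (fun i hi hij => h' i (by omega) hij)


open Fin.NatCast in
/-- The involution `c_{k,l}` in the symmetric group on `{0, 1, …, 2n}`: it swaps
`2j ↔ 2j+1` and `2n−2j−1 ↔ 2n−2j` for each `0 ≤ j < k`, maps `n+i ↦ n−i` for every
integer `i` with `−l ≤ i ≤ l`, and fixes all other points.  (Here it is written as a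
product of the corresponding disjoint transpositions.) -/
def cA (n k l : ℕ) : Equiv.Perm (Fin (2 * n + 1)) :=
  (((List.range k).map fun j =>
      Equiv.swap ((2 * j : ℕ) : Fin (2 * n + 1)) ((2 * j + 1 : ℕ) : Fin (2 * n + 1)) *
      Equiv.swap ((2 * n - 2 * j - 1 : ℕ) : Fin (2 * n + 1))
        ((2 * n - 2 * j : ℕ) : Fin (2 * n + 1))).prod) *
  (((List.range l).map fun i =>
      Equiv.swap ((n - (i + 1) : ℕ) : Fin (2 * n + 1))
        ((n + (i + 1) : ℕ) : Fin (2 * n + 1))).prod)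

section ptlemmas
variable {n : ℕ}

lemma pt_val {m : ℕ} (h : m ≤ 2*n) : ((m : ℕ) : Fin (2*n+1)).val = m :=
  Fin.val_cast_of_lt (by omega)

lemma pt_ne {p q : ℕ} (hp : p ≤ 2*n) (hq : q ≤ 2*n) (hpq : p ≠ q) :
    ((p : ℕ) : Fin (2*n+1)) ≠ ((q : ℕ) : Fin (2*n+1)) := by
  intro h; apply hpq
  have := congrArg Fin.val h
  rwa [pt_val hp, pt_val hq] at this

lemma pt_eq_of_val {x : Fin (2*n+1)} {p : ℕ} (hp : p ≤ 2*n) (h : x.val = p) :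
    x = ((p : ℕ) : Fin (2*n+1)) := by
  apply Fin.ext; rw [pt_val hp, h]

end ptlemmas

section cAapply
variable {n k l : ℕ}

-- second block acting
private lemma P2_fix (hkl : 2*k + l ≤ n) (p : ℕ) (hp : p ≤ 2*n)
    (h : ∀ i < l, p ≠ n - (i+1) ∧ p ≠ n + (i+1)) :
    (((List.range l).map fun i =>
      Equiv.swap ((n - (i + 1) : ℕ) : Fin (2 * n + 1))
        ((n + (i + 1) : ℕ) : Fin (2 * n + 1))).prod) ((p : ℕ) : Fin (2*n+1))
      = ((p : ℕ) : Fin (2*n+1)) := by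
  apply prod_range_map_fix
  intro i hi
  exact Equiv.swap_apply_of_ne_of_ne
    (pt_ne hp (by omega) (h i hi).1) (pt_ne hp (by omega) (h i hi).2)

private lemma P2_hit_lo (hkl : 2*k + l ≤ n) (i : ℕ) (hi : i < l) :
    (((List.range l).map fun i =>
      Equiv.swap ((n - (i + 1) : ℕ) : Fin (2 * n + 1))
        ((n + (i + 1) : ℕ) : Fin (2 * n + 1))).prod) ((n - (i+1) : ℕ) : Fin (2*n+1))
      = ((n + (i+1) : ℕ) : Fin (2*n+1)) := by
  have e : ∀ i' < l, i' ≠ i → ∀ q : ℕ, q ≤ 2*n → q ≠ n - (i'+1) → q ≠ n + (i'+1) →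
      Equiv.swap ((n - (i' + 1) : ℕ) : Fin (2 * n + 1)) ((n + (i' + 1) : ℕ) : Fin (2 * n + 1))
        ((q:ℕ) : Fin (2*n+1)) = ((q:ℕ) : Fin (2*n+1)) := by
    intro i' hi' _ q hq h1 h2
    exact Equiv.swap_apply_of_ne_of_ne (pt_ne hq (by omega) h1) (pt_ne hq (by omega) h2)
  rw [prod_range_map_hit _ l i _ hi
    (fun i' hi' hne => e i' hi' hne _ (by omega) (by omega) (by omega))
    (by
      intro i' hi' hne
      rw [Equiv.swap_apply_left]
      exact e i' hi' hne _ (by omega) (by omega) (by omega))]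
  exact Equiv.swap_apply_left _ _

private lemma P2_hit_hi (hkl : 2*k + l ≤ n) (i : ℕ) (hi : i < l) :
    (((List.range l).map fun i =>
      Equiv.swap ((n - (i + 1) : ℕ) : Fin (2 * n + 1))
        ((n + (i + 1) : ℕ) : Fin (2 * n + 1))).prod) ((n + (i+1) : ℕ) : Fin (2*n+1))
      = ((n - (i+1) : ℕ) : Fin (2*n+1)) := by
  have e : ∀ i' < l, i' ≠ i → ∀ q : ℕ, q ≤ 2*n → q ≠ n - (i'+1) → q ≠ n + (i'+1) →
      Equiv.swap ((n - (i' + 1) : ℕ) : Fin (2 * n + 1)) ((n + (i' + 1) : ℕ) : Fin (2 * n + 1))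
        ((q:ℕ) : Fin (2*n+1)) = ((q:ℕ) : Fin (2*n+1)) := by
    intro i' hi' _ q hq h1 h2
    exact Equiv.swap_apply_of_ne_of_ne (pt_ne hq (by omega) h1) (pt_ne hq (by omega) h2)
  rw [prod_range_map_hit _ l i _ hi
    (fun i' hi' hne => e i' hi' hne _ (by omega) (by omega) (by omega))
    (by
      intro i' hi' hne
      rw [Equiv.swap_apply_right]
      exact e i' hi' hne _ (by omega) (by omega) (by omega))]
  exact Equiv.swap_apply_right _ _

-- first block
private lemma P1_fix (hkl : 2*k + l ≤ n) (p : ℕ) (hp : p ≤ 2*n)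
    (h : ∀ j < k, p ≠ 2*j ∧ p ≠ 2*j+1 ∧ p ≠ 2*n-2*j-1 ∧ p ≠ 2*n-2*j) :
    (((List.range k).map fun j =>
      Equiv.swap ((2 * j : ℕ) : Fin (2 * n + 1)) ((2 * j + 1 : ℕ) : Fin (2 * n + 1)) *
      Equiv.swap ((2 * n - 2 * j - 1 : ℕ) : Fin (2 * n + 1))
        ((2 * n - 2 * j : ℕ) : Fin (2 * n + 1))).prod) ((p : ℕ) : Fin (2*n+1))
      = ((p : ℕ) : Fin (2*n+1)) := by
  have hk : 2*k ≤ n := by omega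
  apply prod_range_map_fix
  intro j hj
  rw [Equiv.Perm.mul_apply,
    Equiv.swap_apply_of_ne_of_ne (pt_ne hp (by omega) (h j hj).2.2.1)
      (pt_ne hp (by omega) (h j hj).2.2.2),
    Equiv.swap_apply_of_ne_of_ne (pt_ne hp (by omega) (h j hj).1)
      (pt_ne hp (by omega) (h j hj).2.1)]

private lemma F1_fix (hkl : 2*k + l ≤ n) (j : ℕ) (hj : j < k) (q : ℕ) (hq : q ≤ 2*n)
    (h1 : q ≠ 2*j) (h2 : q ≠ 2*j+1) (h3 : q ≠ 2*n-2*j-1) (h4 : q ≠ 2*n-2*j) :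
    (Equiv.swap ((2 * j : ℕ) : Fin (2 * n + 1)) ((2 * j + 1 : ℕ) : Fin (2 * n + 1)) *
      Equiv.swap ((2 * n - 2 * j - 1 : ℕ) : Fin (2 * n + 1))
        ((2 * n - 2 * j : ℕ) : Fin (2 * n + 1))) ((q : ℕ) : Fin (2*n+1))
      = ((q : ℕ) : Fin (2*n+1)) := by
  rw [Equiv.Perm.mul_apply,
    Equiv.swap_apply_of_ne_of_ne (pt_ne hq (by omega) h3) (pt_ne hq (by omega) h4),
    Equiv.swap_apply_of_ne_of_ne (pt_ne hq (by omega) h1) (pt_ne hq (by omega) h2)]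

private lemma F1_eval (hkl : 2*k + l ≤ n) (j : ℕ) (hj : j < k) (p q : ℕ)
    (hpq : (p = 2*j ∧ q = 2*j+1) ∨ (p = 2*j+1 ∧ q = 2*j) ∨
      (p = 2*n-2*j-1 ∧ q = 2*n-2*j) ∨ (p = 2*n-2*j ∧ q = 2*n-2*j-1)) :
    (Equiv.swap ((2 * j : ℕ) : Fin (2 * n + 1)) ((2 * j + 1 : ℕ) : Fin (2 * n + 1)) *
      Equiv.swap ((2 * n - 2 * j - 1 : ℕ) : Fin (2 * n + 1))
        ((2 * n - 2 * j : ℕ) : Fin (2 * n + 1))) ((p : ℕ) : Fin (2*n+1))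
      = ((q : ℕ) : Fin (2*n+1)) := by
  rw [Equiv.Perm.mul_apply]
  rcases hpq with ⟨hp, hq⟩ | ⟨hp, hq⟩ | ⟨hp, hq⟩ | ⟨hp, hq⟩ <;> subst hp <;> subst hq
  · rw [Equiv.swap_apply_of_ne_of_ne (pt_ne (by omega) (by omega) (by omega))
      (pt_ne (by omega) (by omega) (by omega)), Equiv.swap_apply_left]
  · rw [Equiv.swap_apply_of_ne_of_ne (pt_ne (by omega) (by omega) (by omega))
      (pt_ne (by omega) (by omega) (by omega)), Equiv.swap_apply_right]
  · rw [Equiv.swap_apply_left,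
      Equiv.swap_apply_of_ne_of_ne (pt_ne (by omega) (by omega) (by omega))
      (pt_ne (by omega) (by omega) (by omega))]
  · rw [Equiv.swap_apply_right,
      Equiv.swap_apply_of_ne_of_ne (pt_ne (by omega) (by omega) (by omega))
      (pt_ne (by omega) (by omega) (by omega))]

private lemma P1_hit (hkl : 2*k + l ≤ n) (j : ℕ) (hj : j < k) (p q : ℕ)
    (hpq : (p = 2*j ∧ q = 2*j+1) ∨ (p = 2*j+1 ∧ q = 2*j) ∨
      (p = 2*n-2*j-1 ∧ q = 2*n-2*j) ∨ (p = 2*n-2*j ∧ q = 2*n-2*j-1)) :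
    (((List.range k).map fun j =>
      Equiv.swap ((2 * j : ℕ) : Fin (2 * n + 1)) ((2 * j + 1 : ℕ) : Fin (2 * n + 1)) *
      Equiv.swap ((2 * n - 2 * j - 1 : ℕ) : Fin (2 * n + 1))
        ((2 * n - 2 * j : ℕ) : Fin (2 * n + 1))).prod) ((p : ℕ) : Fin (2*n+1))
      = ((q : ℕ) : Fin (2*n+1)) := by
  rw [prod_range_map_hit _ k j _ hj
    (fun j' hj' hne => F1_fix hkl j' hj' p (by omega) (by omega) (by omega) (by omega) (by omega))
    (by
      intro j' hj' hne
      rw [F1_eval hkl j hj p q hpq]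
      exact F1_fix hkl j' hj' q (by omega) (by omega) (by omega) (by omega) (by omega))]
  exact F1_eval hkl j hj p q hpq

lemma cA_lo (hkl : 2*k + l ≤ n) (j : ℕ) (hj : j < k) :
    cA n k l ((2*j : ℕ) : Fin (2*n+1)) = ((2*j+1 : ℕ) : Fin (2*n+1)) := by
  rw [cA, Equiv.Perm.mul_apply, P2_fix hkl _ (by omega) (fun i hi => ⟨by omega, by omega⟩),
    P1_hit hkl j hj _ _ (by left; exact ⟨rfl, rfl⟩)]

lemma cA_lo' (hkl : 2*k + l ≤ n) (j : ℕ) (hj : j < k) :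
    cA n k l ((2*j+1 : ℕ) : Fin (2*n+1)) = ((2*j : ℕ) : Fin (2*n+1)) := by
  rw [cA, Equiv.Perm.mul_apply, P2_fix hkl _ (by omega) (fun i hi => ⟨by omega, by omega⟩),
    P1_hit hkl j hj _ _ (by right; left; exact ⟨rfl, rfl⟩)]

lemma cA_hi (hkl : 2*k + l ≤ n) (j : ℕ) (hj : j < k) :
    cA n k l ((2*n-2*j-1 : ℕ) : Fin (2*n+1)) = ((2*n-2*j : ℕ) : Fin (2*n+1)) := by
  rw [cA, Equiv.Perm.mul_apply, P2_fix hkl _ (by omega) (fun i hi => ⟨by omega, by omega⟩),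
    P1_hit hkl j hj _ _ (by right; right; left; exact ⟨rfl, rfl⟩)]

lemma cA_hi' (hkl : 2*k + l ≤ n) (j : ℕ) (hj : j < k) :
    cA n k l ((2*n-2*j : ℕ) : Fin (2*n+1)) = ((2*n-2*j-1 : ℕ) : Fin (2*n+1)) := by
  rw [cA, Equiv.Perm.mul_apply, P2_fix hkl _ (by omega) (fun i hi => ⟨by omega, by omega⟩),
    P1_hit hkl j hj _ _ (by right; right; right; exact ⟨rfl, rfl⟩)]

lemma cA_mid_lo (hkl : 2*k + l ≤ n) (i : ℕ) (hi : i < l) :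
    cA n k l ((n-(i+1) : ℕ) : Fin (2*n+1)) = ((n+(i+1) : ℕ) : Fin (2*n+1)) := by
  rw [cA, Equiv.Perm.mul_apply, P2_hit_lo hkl i hi,
    P1_fix hkl _ (by omega) (fun j hj => ⟨by omega, by omega, by omega, by omega⟩)]

lemma cA_mid_hi (hkl : 2*k + l ≤ n) (i : ℕ) (hi : i < l) :
    cA n k l ((n+(i+1) : ℕ) : Fin (2*n+1)) = ((n-(i+1) : ℕ) : Fin (2*n+1)) := by
  rw [cA, Equiv.Perm.mul_apply, P2_hit_hi hkl i hi,
    P1_fix hkl _ (by omega) (fun j hj => ⟨by omega, by omega, by omega, by omega⟩)]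

lemma cA_fix (hkl : 2*k + l ≤ n) (p : ℕ) (h1 : 2*k ≤ p) (h2 : p + 2*k ≤ 2*n)
    (h3 : p + l < n ∨ p = n ∨ n + l < p) :
    cA n k l ((p : ℕ) : Fin (2*n+1)) = ((p : ℕ) : Fin (2*n+1)) := by
  rw [cA, Equiv.Perm.mul_apply, P2_fix hkl _ (by omega) (fun i hi => ⟨by omega, by omega⟩),
    P1_fix hkl _ (by omega) (fun j hj => ⟨by omega, by omega, by omega, by omega⟩)]

end cAapply

section main
variable (n : ℕ) (u : Equiv.Perm (Fin (2*n+1)))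

def ctr : Fin (2*n+1) := ⟨n, by omega⟩

lemma rev_val (x : Fin (2*n+1)) : (x.rev).val = 2*n - x.val := by
  rw [Fin.val_rev]; omega

lemma rev_eq_self {x : Fin (2*n+1)} : x.rev = x ↔ x = ctr n := by
  constructor
  · intro h
    have := congrArg Fin.val h
    rw [rev_val] at this
    exact Fin.ext (by simp only [ctr]; omega)
  · intro h; subst h; exact Fin.ext (by simp only [rev_val, ctr]; omega)

def Aset : Finset (Fin (2*n+1)) := Finset.univ.filter fun x => x.val < n ∧ u x = x
def Bset : Finset (Fin (2*n+1)) := Finset.univ.filter fun x => x.val < n ∧ u x = x.rev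
def Mset : Finset (Fin (2*n+1)) :=
  Finset.univ.filter fun x => x.val < n ∧ u x ≠ x ∧ u x ≠ x.rev
def piU (x : Fin (2*n+1)) : Fin (2*n+1) := if (u x).val < n then u x else (u x).rev
def Mplus : Finset (Fin (2*n+1)) := (Mset n u).filter fun x => x.val < (piU n u x).val

noncomputable def pick (s : Finset (Fin (2*n+1))) (t : ℕ) : Fin (2*n+1) :=
  if h : t < s.card then (s.equivFin.symm ⟨t, h⟩ : {x // x ∈ s}) else ctr n

noncomputable def idx (s : Finset (Fin (2*n+1))) (x : Fin (2*n+1)) : ℕ :=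
  if h : x ∈ s then (s.equivFin ⟨x, h⟩ : Fin s.card).val else 0

lemma pick_mem {s : Finset (Fin (2*n+1))} {t : ℕ} (h : t < s.card) : pick n s t ∈ s := by
  rw [pick, dif_pos h]; exact (s.equivFin.symm ⟨t, h⟩).2

lemma idx_pick {s : Finset (Fin (2*n+1))} {t : ℕ} (h : t < s.card) :
    idx n s (pick n s t) = t := by
  have hm : pick n s t ∈ s := pick_mem n h
  rw [idx, dif_pos hm]
  have : (⟨pick n s t, hm⟩ : {x // x ∈ s}) = s.equivFin.symm ⟨t, h⟩ := by
    apply Subtype.ext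
    show pick n s t = _
    unfold pick
    rw [dif_pos h]
  rw [this, Equiv.apply_symm_apply]

section withhyp

lemma u_ctr (h2 : ∀ x, u (u x) = x) (hc : ∀ x, u x.rev = (u x).rev) : u (ctr n) = ctr n := by
  have h1 : (ctr n : Fin (2*n+1)).rev = ctr n := rev_eq_self n |>.mpr rfl
  have := hc (ctr n)
  rw [h1] at this
  exact (rev_eq_self n).mp this.symm

lemma u_ne_ctr (h2 : ∀ x, u (u x) = x) (hc : ∀ x, u x.rev = (u x).rev) {x : Fin (2*n+1)} (hx : x ≠ ctr n) : u x ≠ ctr n := by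
  intro h
  apply hx
  have := congrArg u h
  rw [h2, u_ctr n u h2 hc] at this
  exact this

lemma mem_Mset {x : Fin (2*n+1)} :
    x ∈ Mset n u ↔ x.val < n ∧ u x ≠ x ∧ u x ≠ x.rev := by
  simp [Mset]

lemma piU_mem (h2 : ∀ x, u (u x) = x) (hc : ∀ x, u x.rev = (u x).rev) {x : Fin (2*n+1)} (hx : x ∈ Mset n u) : piU n u x ∈ Mset n u := by
  rw [mem_Mset] at hx ⊢
  obtain ⟨hv, hne1, hne2⟩ := hx
  rw [piU]
  by_cases h : (u x).val < n
  · rw [if_pos h]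
    refine ⟨h, ?_, ?_⟩
    · intro hh; rw [h2] at hh; exact hne1 hh.symm
    · rw [h2]
      intro hh
      apply hne2
      have := congrArg Fin.rev hh
      rw [Fin.rev_rev] at this
      exact this.symm
  · rw [if_neg h]
    have huv : (u x).val ≠ n := by
      intro hh
      have hcx : u x = ctr n := Fin.ext hh
      exact u_ne_ctr n u h2 hc (by intro hh2; subst hh2; simp [ctr] at hv) hcx
    refine ⟨by rw [rev_val]; omega, ?_, ?_⟩
    · rw [hc, h2]
      intro hh
      have := congrArg Fin.rev hh
      rw [Fin.rev_rev, Fin.rev_rev] at this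
      exact hne1 this.symm
    · rw [hc, h2, Fin.rev_rev]
      intro hh
      exact hne2 hh.symm

lemma piU_piU (h2 : ∀ x, u (u x) = x) (hc : ∀ x, u x.rev = (u x).rev) {x : Fin (2*n+1)} (hx : x ∈ Mset n u) : piU n u (piU n u x) = x := by
  rw [mem_Mset] at hx
  obtain ⟨hv, hne1, hne2⟩ := hx
  by_cases h : (u x).val < n
  · have hx1 : piU n u x = u x := if_pos h
    rw [hx1, piU, h2, if_pos hv]
  · have hx1 : piU n u x = (u x).rev := if_neg h
    rw [hx1, piU, hc, h2]
    have hv2 : ¬ ((x.rev).val < n) := by rw [rev_val]; omega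
    rw [if_neg hv2, Fin.rev_rev]

lemma piU_val_ne {x : Fin (2*n+1)} (hx : x ∈ Mset n u) : (piU n u x).val ≠ x.val := by
  rw [mem_Mset] at hx
  obtain ⟨hv, hne1, hne2⟩ := hx
  rw [piU]
  by_cases h : (u x).val < n
  · rw [if_pos h]
    intro hh; exact hne1 (Fin.ext hh)
  · rw [if_neg h, rev_val]
    intro hh
    apply hne2
    apply Fin.ext
    rw [rev_val]
    have := (u x).isLt
    omega

end withhyp

lemma card_H : (Finset.univ.filter fun x : Fin (2*n+1) => x.val < n).card = n := by
  have h : (Finset.univ.filter fun x : Fin (2*n+1) => x.val < n).card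
      = (Finset.range n).card := by
    apply Finset.card_bij' (i := fun (x : Fin (2*n+1)) _ => x.val)
      (j := fun (m : ℕ) hm => (⟨m, by simp at hm; omega⟩ : Fin (2*n+1))) <;>
      (intro a ha; simp at ha ⊢) <;> omega
  simpa using h

lemma mem_Aset {x : Fin (2*n+1)} : x ∈ Aset n u ↔ x.val < n ∧ u x = x := by simp [Aset]
lemma mem_Bset {x : Fin (2*n+1)} : x ∈ Bset n u ↔ x.val < n ∧ u x = x.rev := by simp [Bset]

lemma card_ABM : (Aset n u).card + (Bset n u).card + (Mset n u).card = n := by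
  have d1 : Disjoint (Aset n u) (Bset n u) := by
    rw [Finset.disjoint_left]
    intro x hA hB
    rw [mem_Aset] at hA
    rw [mem_Bset] at hB
    have : x.rev = x := hB.2.symm.trans hA.2
    rw [rev_eq_self] at this
    subst this
    simp [ctr] at hA
  have d2 : Disjoint (Aset n u ∪ Bset n u) (Mset n u) := by
    rw [Finset.disjoint_left]
    intro x hAB hM
    rw [mem_Mset] at hM
    rcases Finset.mem_union.mp hAB with h | h
    · exact hM.2.1 ((mem_Aset n u).mp h).2
    · exact hM.2.2 ((mem_Bset n u).mp h).2
  have hU : (Aset n u ∪ Bset n u) ∪ Mset n u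
      = Finset.univ.filter (fun x => x.val < n) := by
    ext x
    simp only [Finset.mem_union, mem_Aset, mem_Bset, mem_Mset, Finset.mem_filter,
      Finset.mem_univ, true_and]
    constructor
    · rintro ((h | h) | h) <;> exact h.1
    · intro h
      by_cases h1 : u x = x
      · exact Or.inl (Or.inl ⟨h, h1⟩)
      by_cases hb : u x = x.rev
      · exact Or.inl (Or.inr ⟨h, hb⟩)
      · exact Or.inr ⟨h, h1, hb⟩
  have h := card_H n
  rw [← hU, Finset.card_union_of_disjoint d2, Finset.card_union_of_disjoint d1] at h
  exact h

lemma mem_Mplus {x : Fin (2*n+1)} :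
    x ∈ Mplus n u ↔ x ∈ Mset n u ∧ x.val < (piU n u x).val := by
  simp [Mplus, Finset.mem_filter]

lemma card_Mset (h2 : ∀ x, u (u x) = x) (hc : ∀ x, u x.rev = (u x).rev) :
    (Mset n u).card = 2 * (Mplus n u).card := by
  have hM : Mset n u = Mplus n u ∪ (Mplus n u).image (piU n u) := by
    ext x
    simp only [Finset.mem_union, mem_Mplus, Finset.mem_image]
    constructor
    · intro hx
      rcases Nat.lt_or_ge x.val (piU n u x).val with h | h
      · exact Or.inl ⟨hx, h⟩
      · refine Or.inr ⟨piU n u x, ⟨piU_mem n u h2 hc hx, ?_⟩, piU_piU n u h2 hc hx⟩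
        rw [piU_piU n u h2 hc hx]
        have := piU_val_ne n u hx
        omega
    · rintro (⟨hx, _⟩ | ⟨y, ⟨hy, _⟩, rfl⟩)
      · exact hx
      · exact piU_mem n u h2 hc hy
  have hinj : Set.InjOn (piU n u) (Mplus n u) := by
    intro a ha b hb hab
    have ha' := ((mem_Mplus n u).mp ha).1
    have hb' := ((mem_Mplus n u).mp hb).1
    rw [← piU_piU n u h2 hc ha', hab, piU_piU n u h2 hc hb']
  have hd : Disjoint (Mplus n u) ((Mplus n u).image (piU n u)) := by
    rw [Finset.disjoint_left]
    intro x hx hx'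
    obtain ⟨y, hy, hyx⟩ := Finset.mem_image.mp hx'
    have hy1 := (mem_Mplus n u).mp hy
    have hx1 := (mem_Mplus n u).mp hx
    have hpx : piU n u x = y := by rw [← hyx, piU_piU n u h2 hc hy1.1]
    have h1 : x.val < y.val := by rw [← hpx]; exact hx1.2
    have h2' : y.val < x.val := by rw [← hyx]; exact hy1.2
    omega
  rw [hM, Finset.card_union_of_disjoint hd, Finset.card_image_of_injOn hinj]
  omega

noncomputable def g0 (m : ℕ) : Fin (2*n+1) :=
  if m < 2 * (Mplus n u).card then
    (if m % 2 = 0 then pick n (Mplus n u) (m/2) else u (pick n (Mplus n u) (m/2)))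
  else if m < n - (Bset n u).card then pick n (Aset n u) (m - 2*(Mplus n u).card)
  else if m < n then pick n (Bset n u) (m - (n - (Bset n u).card))
  else ctr n

def fp (x : Fin (2*n+1)) : Fin (2*n+1) := if x.val ≤ n then x else x.rev

noncomputable def dec (x : Fin (2*n+1)) : ℕ :=
  if x = ctr n then n
  else if u x = x then 2*(Mplus n u).card + idx n (Aset n u) x
  else if u x = x.rev then (n - (Bset n u).card) + idx n (Bset n u) x
  else if x.val < (piU n u x).val then 2 * idx n (Mplus n u) x
  else 2 * idx n (Mplus n u) (piU n u x) + 1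

lemma fp_rev (x : Fin (2*n+1)) : fp n (x.rev) = fp n x := by
  rcases Nat.lt_trichotomy x.val n with h | h | h
  · have h1 : ¬ (x.rev.val ≤ n) := by rw [rev_val]; omega
    rw [fp, fp, if_neg h1, if_pos (by omega : x.val ≤ n), Fin.rev_rev]
  · have : x = ctr n := Fin.ext h
    subst this
    rw [(rev_eq_self n).mpr rfl]
  · have h1 : x.rev.val ≤ n := by rw [rev_val]; omega
    have hx2 : ¬ (x.val ≤ n) := by omega
    rw [fp, fp, if_pos h1, if_neg hx2]

lemma fp_u (h2 : ∀ x, u (u x) = x) (hc : ∀ x, u x.rev = (u x).rev)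
    {x : Fin (2*n+1)} (hx : x ∈ Mset n u) : fp n (u x) = piU n u x := by
  have hv := ((mem_Mset n u).mp hx).1
  have hun : (u x).val ≠ n := by
    intro hh
    exact u_ne_ctr n u h2 hc (by intro hh2; subst hh2; simp [ctr] at hv) (Fin.ext hh)
  rw [fp, piU]
  by_cases h : (u x).val < n
  · rw [if_pos (by omega), if_pos h]
  · rw [if_neg (by omega), if_neg h]

lemma hKL (h2 : ∀ x, u (u x) = x) (hc : ∀ x, u x.rev = (u x).rev) :
    2 * (Mplus n u).card + (Bset n u).card ≤ n := by
  have h1 := card_ABM n u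
  have h3 := card_Mset n u h2 hc
  omega

lemma cardA (h2 : ∀ x, u (u x) = x) (hc : ∀ x, u x.rev = (u x).rev) :
    (Aset n u).card = n - (2 * (Mplus n u).card + (Bset n u).card) := by
  have h1 := card_ABM n u
  have h3 := card_Mset n u h2 hc
  omega

lemma dec_fp_g0 (h2 : ∀ x, u (u x) = x) (hc : ∀ x, u x.rev = (u x).rev)
    (m : ℕ) (hm : m ≤ n) : dec n u (fp n (g0 n u m)) = m := by
  have hkl := hKL n u h2 hc
  have hA := cardA n u h2 hc
  by_cases c1 : m < 2 * (Mplus n u).card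
  · have hdiv : m / 2 < (Mplus n u).card := by omega
    set x := pick n (Mplus n u) (m/2) with hxdef
    have hxm : x ∈ Mplus n u := pick_mem n hdiv
    have hxM := ((mem_Mplus n u).mp hxm).1
    have hxlt := ((mem_Mplus n u).mp hxm).2
    have hxv := ((mem_Mset n u).mp hxM).1
    have hxne1 := ((mem_Mset n u).mp hxM).2.1
    have hxne2 := ((mem_Mset n u).mp hxM).2.2
    have hxc : x ≠ ctr n := by intro h; rw [h] at hxv; simp [ctr] at hxv
    by_cases c2 : m % 2 = 0
    · rw [g0, if_pos c1, if_pos c2, fp, if_pos (by omega : x.val ≤ n)]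
      rw [dec, if_neg hxc, if_neg hxne1, if_neg hxne2, if_pos hxlt, idx_pick n hdiv]
      omega
    · rw [g0, if_pos c1, if_neg c2]
      rw [fp_u n u h2 hc hxM]
      set y := piU n u x with hydef
      have hyM : y ∈ Mset n u := piU_mem n u h2 hc hxM
      have hyv := ((mem_Mset n u).mp hyM).1
      have hyne1 := ((mem_Mset n u).mp hyM).2.1
      have hyne2 := ((mem_Mset n u).mp hyM).2.2
      have hyc : y ≠ ctr n := by intro h; rw [h] at hyv; simp [ctr] at hyv
      have hyx : piU n u y = x := by rw [hydef]; exact piU_piU n u h2 hc hxM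
      have hylt : ¬ (y.val < (piU n u y).val) := by rw [hyx]; omega
      rw [dec, if_neg hyc, if_neg hyne1, if_neg hyne2, if_neg hylt, hyx, hxdef,
        idx_pick n hdiv]
      omega
  · by_cases c2 : m < n - (Bset n u).card
    · have hidx : m - 2*(Mplus n u).card < (Aset n u).card := by omega
      set x := pick n (Aset n u) (m - 2*(Mplus n u).card) with hxdef
      have hxm : x ∈ Aset n u := pick_mem n hidx
      have hxv := ((mem_Aset n u).mp hxm).1
      have hxfix := ((mem_Aset n u).mp hxm).2
      have hxc : x ≠ ctr n := by intro h; rw [h] at hxv; simp [ctr] at hxv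
      rw [g0, if_neg c1, if_pos c2, fp, if_pos (by omega : x.val ≤ n)]
      rw [dec, if_neg hxc, if_pos hxfix, idx_pick n hidx]
      omega
    · by_cases c3 : m < n
      · have hidx : m - (n - (Bset n u).card) < (Bset n u).card := by omega
        set x := pick n (Bset n u) (m - (n - (Bset n u).card)) with hxdef
        have hxm : x ∈ Bset n u := pick_mem n hidx
        have hxv := ((mem_Bset n u).mp hxm).1
        have hxrefl := ((mem_Bset n u).mp hxm).2
        have hxc : x ≠ ctr n := by intro h; rw [h] at hxv; simp [ctr] at hxv
        have hxne1 : u x ≠ x := by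
          rw [hxrefl]
          intro h
          exact hxc ((rev_eq_self n).mp h)
        rw [g0, if_neg c1, if_neg c2, if_pos c3, fp, if_pos (by omega : x.val ≤ n)]
        rw [dec, if_neg hxc, if_neg hxne1, if_pos hxrefl, idx_pick n hidx]
        omega
      · have hmn : m = n := by omega
        rw [g0, if_neg c1, if_neg c2, if_neg c3, fp, if_pos (by simp [ctr]),
          dec, if_pos rfl]
        omega

noncomputable def G (x : Fin (2*n+1)) : Fin (2*n+1) :=
  if x.val ≤ n then g0 n u x.val else (g0 n u (2*n - x.val)).rev

lemma G_pt (p : ℕ) (hp : p ≤ 2*n) :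
    G n u ((p : ℕ) : Fin (2*n+1))
      = if p ≤ n then g0 n u p else (g0 n u (2*n - p)).rev := by
  rw [G, pt_val hp]

lemma g0_inj (h2 : ∀ x, u (u x) = x) (hc : ∀ x, u x.rev = (u x).rev)
    {m m' : ℕ} (hm : m ≤ n) (hm' : m' ≤ n)
    (h : fp n (g0 n u m) = fp n (g0 n u m')) : m = m' := by
  rw [← dec_fp_g0 n u h2 hc m hm, ← dec_fp_g0 n u h2 hc m' hm', h]

lemma g0_n (h2 : ∀ x, u (u x) = x) (hc : ∀ x, u x.rev = (u x).rev) :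
    g0 n u n = ctr n := by
  have hkl := hKL n u h2 hc
  rw [g0, if_neg (by omega), if_neg (by omega), if_neg (by omega)]

lemma fp_ctr : fp n (ctr n) = ctr n := by rw [fp, if_pos (by simp [ctr])]

lemma G_inj (h2 : ∀ x, u (u x) = x) (hc : ∀ x, u x.rev = (u x).rev) :
    Function.Injective (G n u) := by
  intro x y h
  have hx2 := x.isLt
  have hy2 := y.isLt
  rw [G, G] at h
  by_cases hx : x.val ≤ n <;> by_cases hy : y.val ≤ n
  · rw [if_pos hx, if_pos hy] at h
    exact Fin.ext (g0_inj n u h2 hc hx hy (by rw [h]))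
  · rw [if_pos hx, if_neg hy] at h
    have hfp : fp n (g0 n u x.val) = fp n (g0 n u (2*n - y.val)) := by
      rw [h, fp_rev]
    have hv : x.val = 2*n - y.val := g0_inj n u h2 hc hx (by omega) hfp
    rw [← hv] at h
    have hcc : g0 n u x.val = ctr n := by
      have := (rev_eq_self n).mp h.symm
      exact this
    have : fp n (g0 n u x.val) = fp n (g0 n u n) := by
      rw [hcc, g0_n n u h2 hc]
    have := g0_inj n u h2 hc hx (le_refl n) this
    omega
  · rw [if_neg hx, if_pos hy] at h
    have hfp : fp n (g0 n u (2*n - x.val)) = fp n (g0 n u y.val) := by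
      rw [← h, fp_rev]
    have hv : 2*n - x.val = y.val := g0_inj n u h2 hc (by omega) hy hfp
    rw [hv] at h
    have hcc : g0 n u y.val = ctr n := (rev_eq_self n).mp h
    have : fp n (g0 n u y.val) = fp n (g0 n u n) := by
      rw [hcc, g0_n n u h2 hc]
    have := g0_inj n u h2 hc hy (le_refl n) this
    omega
  · rw [if_neg hx, if_neg hy] at h
    have h' : g0 n u (2*n - x.val) = g0 n u (2*n - y.val) := by
      have := congrArg Fin.rev h
      rwa [Fin.rev_rev, Fin.rev_rev] at this
    have := g0_inj n u h2 hc (show 2*n - x.val ≤ n by omega)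
      (show 2*n - y.val ≤ n by omega) (by rw [h'])
    exact Fin.ext (by omega)

lemma G_ctr (h2 : ∀ x, u (u x) = x) (hc : ∀ x, u x.rev = (u x).rev) :
    G n u (ctr n) = ctr n := by
  rw [G, if_pos (by simp [ctr])]
  show g0 n u n = ctr n
  exact g0_n n u h2 hc

lemma G_rev (h2 : ∀ x, u (u x) = x) (hc : ∀ x, u x.rev = (u x).rev)
    (x : Fin (2*n+1)) : G n u (x.rev) = (G n u x).rev := by
  have hx2 := x.isLt
  rcases Nat.lt_trichotomy x.val n with h | h | h
  · rw [G, G, rev_val, if_neg (by omega), if_pos (by omega)]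
    congr 1
    congr 1
    omega
  · have hx : x = ctr n := Fin.ext h
    subst hx
    rw [(rev_eq_self n).mpr rfl, G_ctr n u h2 hc, (rev_eq_self n).mpr rfl]
  · rw [G, G, rev_val, if_pos (by omega), if_neg (by omega), Fin.rev_rev]

lemma g0_lo_even (m : ℕ) (hm : m < 2*(Mplus n u).card) (he : m % 2 = 0) :
    g0 n u m = pick n (Mplus n u) (m/2) := by rw [g0, if_pos hm, if_pos he]

lemma g0_lo_odd (m : ℕ) (hm : m < 2*(Mplus n u).card) (he : ¬ m % 2 = 0) :
    g0 n u m = u (pick n (Mplus n u) (m/2)) := by rw [g0, if_pos hm, if_neg he]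

lemma g0_A (m : ℕ) (hm1 : ¬ m < 2*(Mplus n u).card) (hm2 : m < n - (Bset n u).card) :
    g0 n u m = pick n (Aset n u) (m - 2*(Mplus n u).card) := by
  rw [g0, if_neg hm1, if_pos hm2]

lemma g0_B (m : ℕ) (hm1 : ¬ m < 2*(Mplus n u).card) (hm2 : ¬ m < n - (Bset n u).card)
    (hm3 : m < n) :
    g0 n u m = pick n (Bset n u) (m - (n - (Bset n u).card)) := by
  rw [g0, if_neg hm1, if_neg hm2, if_pos hm3]

lemma G_intertwine (h2 : ∀ x, u (u x) = x) (hc : ∀ x, u x.rev = (u x).rev)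
    (x : Fin (2*n+1)) :
    G n u (cA n (Mplus n u).card (Bset n u).card x) = u (G n u x) := by
  have hkl := hKL n u h2 hc
  have hA := cardA n u h2 hc
  rcases x with ⟨m, hmlt⟩
  by_cases c1 : m < 2 * (Mplus n u).card
  · by_cases ce : m % 2 = 0
    · have hx : (⟨m, hmlt⟩ : Fin (2*n+1)) = ((2*(m/2) : ℕ) : Fin (2*n+1)) :=
        pt_eq_of_val (by omega) (by show m = 2*(m/2); omega)
      have e1 : (2*(m/2)+1)/2 = m/2 := by omega
      have e2 : (2*(m/2))/2 = m/2 := by omega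
      rw [hx, cA_lo hkl (m/2) (by omega), G_pt n u _ (by omega), G_pt n u _ (by omega),
        if_pos (show 2*(m/2)+1 ≤ n by omega), if_pos (show 2*(m/2) ≤ n by omega),
        g0_lo_odd n u _ (by omega) (by omega), g0_lo_even n u _ (by omega) (by omega),
        e1, e2]
    · have hx : (⟨m, hmlt⟩ : Fin (2*n+1)) = ((2*(m/2)+1 : ℕ) : Fin (2*n+1)) :=
        pt_eq_of_val (by omega) (by show m = 2*(m/2)+1; omega)
      have e1 : (2*(m/2)+1)/2 = m/2 := by omega
      have e2 : (2*(m/2))/2 = m/2 := by omega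
      rw [hx, cA_lo' hkl (m/2) (by omega), G_pt n u _ (by omega), G_pt n u _ (by omega),
        if_pos (show 2*(m/2) ≤ n by omega), if_pos (show 2*(m/2)+1 ≤ n by omega),
        g0_lo_even n u _ (by omega) (by omega), g0_lo_odd n u _ (by omega) (by omega),
        e1, e2, h2]
  · by_cases c2 : m < n - (Bset n u).card
    · have hx : (⟨m, hmlt⟩ : Fin (2*n+1)) = ((m : ℕ) : Fin (2*n+1)) :=
        pt_eq_of_val (by omega) rfl
      rw [hx, cA_fix hkl m (by omega) (by omega) (Or.inl (by omega)),
        G_pt n u m (by omega), if_pos (by omega), g0_A n u m c1 c2]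
      exact (((mem_Aset n u).mp (pick_mem n (by omega))).2).symm
    · by_cases c3 : m < n
      · have hx : (⟨m, hmlt⟩ : Fin (2*n+1)) = ((n - (n - m - 1 + 1) : ℕ) : Fin (2*n+1)) :=
          pt_eq_of_val (by omega) (by show m = n - (n - m - 1 + 1); omega)
        rw [hx, cA_mid_lo hkl (n - m - 1) (by omega), G_pt n u _ (by omega),
          G_pt n u _ (by omega), if_neg (show ¬ n + (n - m - 1 + 1) ≤ n by omega),
          if_pos (show n - (n - m - 1 + 1) ≤ n by omega)]
        have e1 : 2*n - (n + (n - m - 1 + 1)) = m := by omega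
        have e2 : n - (n - m - 1 + 1) = m := by omega
        rw [e1, e2, g0_B n u m c1 c2 c3]
        exact (((mem_Bset n u).mp (pick_mem n (by omega))).2).symm
      · by_cases c4 : m = n
        · have hx : (⟨m, hmlt⟩ : Fin (2*n+1)) = ((n : ℕ) : Fin (2*n+1)) :=
            pt_eq_of_val (by omega) (by show m = n; omega)
          rw [hx, cA_fix hkl n (by omega) (by omega) (Or.inr (Or.inl rfl)),
            G_pt n u n (by omega), if_pos (le_refl n), g0_n n u h2 hc, u_ctr n u h2 hc]
        · by_cases c5 : 2*n - m < 2 * (Mplus n u).card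
          · by_cases ce : (2*n - m) % 2 = 0
            · have hx : (⟨m, hmlt⟩ : Fin (2*n+1))
                  = ((2*n - 2*((2*n-m)/2) : ℕ) : Fin (2*n+1)) :=
                pt_eq_of_val (by omega) (by show m = 2*n - 2*((2*n-m)/2); omega)
              rw [hx, cA_hi' hkl ((2*n-m)/2) (by omega), G_pt n u _ (by omega),
                G_pt n u _ (by omega),
                if_neg (show ¬ 2*n - 2*((2*n-m)/2) - 1 ≤ n by omega),
                if_neg (show ¬ 2*n - 2*((2*n-m)/2) ≤ n by omega)]
              have e1 : 2*n - (2*n - 2*((2*n-m)/2) - 1) = 2*((2*n-m)/2)+1 := by omega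
              have e2 : 2*n - (2*n - 2*((2*n-m)/2)) = 2*((2*n-m)/2) := by omega
              have e3 : (2*((2*n-m)/2)+1)/2 = (2*n-m)/2 := by omega
              have e4 : (2*((2*n-m)/2))/2 = (2*n-m)/2 := by omega
              rw [e1, e2, g0_lo_odd n u _ (by omega) (by omega),
                g0_lo_even n u _ (by omega) (by omega), e3, e4]
              exact (hc _).symm
            · have hx : (⟨m, hmlt⟩ : Fin (2*n+1))
                  = ((2*n - 2*((2*n-m)/2) - 1 : ℕ) : Fin (2*n+1)) :=
                pt_eq_of_val (by omega) (by show m = 2*n - 2*((2*n-m)/2) - 1; omega)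
              rw [hx, cA_hi hkl ((2*n-m)/2) (by omega), G_pt n u _ (by omega),
                G_pt n u _ (by omega),
                if_neg (show ¬ 2*n - 2*((2*n-m)/2) ≤ n by omega),
                if_neg (show ¬ 2*n - 2*((2*n-m)/2) - 1 ≤ n by omega)]
              have e1 : 2*n - (2*n - 2*((2*n-m)/2)) = 2*((2*n-m)/2) := by omega
              have e2 : 2*n - (2*n - 2*((2*n-m)/2) - 1) = 2*((2*n-m)/2)+1 := by omega
              have e3 : (2*((2*n-m)/2)+1)/2 = (2*n-m)/2 := by omega
              have e4 : (2*((2*n-m)/2))/2 = (2*n-m)/2 := by omega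
              rw [e1, e2, g0_lo_even n u _ (by omega) (by omega),
                g0_lo_odd n u _ (by omega) (by omega), e3, e4, hc, h2]
          · by_cases c6 : m ≤ n + (Bset n u).card
            · have hx : (⟨m, hmlt⟩ : Fin (2*n+1))
                  = ((n + (m - n - 1 + 1) : ℕ) : Fin (2*n+1)) :=
                pt_eq_of_val (by omega) (by show m = n + (m - n - 1 + 1); omega)
              rw [hx, cA_mid_hi hkl (m - n - 1) (by omega), G_pt n u _ (by omega),
                G_pt n u _ (by omega),
                if_pos (show n - (m - n - 1 + 1) ≤ n by omega),
                if_neg (show ¬ n + (m - n - 1 + 1) ≤ n by omega)]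
              have e1 : n - (m - n - 1 + 1) = 2*n - m := by omega
              have e2 : 2*n - (n + (m - n - 1 + 1)) = 2*n - m := by omega
              rw [e1, e2, g0_B n u (2*n - m) (by omega) (by omega) (by omega), hc,
                ((mem_Bset n u).mp (pick_mem n (by omega))).2, Fin.rev_rev]
            · have hx : (⟨m, hmlt⟩ : Fin (2*n+1)) = ((m : ℕ) : Fin (2*n+1)) :=
                pt_eq_of_val (by omega) rfl
              rw [hx, cA_fix hkl m (by omega) (by omega) (Or.inr (Or.inr (by omega))),
                G_pt n u m (by omega), if_neg (by omega),
                g0_A n u (2*n - m) (by omega) (by omega), hc,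
                ((mem_Aset n u).mp (pick_mem n (by omega))).2]

lemma full_half (Q : Fin (2*n+1) → Prop) [DecidablePred Q] (hQ : ∀ x, Q x.rev ↔ Q x) :
    (Finset.univ.filter fun x => Q x ∧ x ≠ ctr n).card
      = 2 * (Finset.univ.filter fun x => x.val < n ∧ Q x).card := by
  have himg : (Finset.univ.filter fun x => Q x ∧ x ≠ ctr n)
      = (Finset.univ.filter fun x => x.val < n ∧ Q x)
        ∪ (Finset.univ.filter fun x => x.val < n ∧ Q x).image Fin.rev := by
    ext x
    have hx2 := x.isLt
    simp only [Finset.mem_filter, Finset.mem_univ, true_and, Finset.mem_union,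
      Finset.mem_image]
    constructor
    · rintro ⟨hq, hne⟩
      have hnv : x.val ≠ n := fun h => hne (Fin.ext h)
      rcases Nat.lt_or_ge x.val n with h | h
      · exact Or.inl ⟨h, hq⟩
      · exact Or.inr ⟨x.rev, ⟨by rw [rev_val]; omega, (hQ x).mpr hq⟩, Fin.rev_rev x⟩
    · rintro (⟨h1, h2⟩ | ⟨y, ⟨hy1, hy2⟩, rfl⟩)
      · exact ⟨h2, fun h => by rw [h] at h1; simp [ctr] at h1⟩
      · refine ⟨(hQ y).mpr hy2, fun h => ?_⟩
        have := congrArg Fin.val h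
        rw [rev_val] at this
        simp only [ctr] at this
        omega
  have hd : Disjoint (Finset.univ.filter fun x => x.val < n ∧ Q x)
      ((Finset.univ.filter fun x => x.val < n ∧ Q x).image Fin.rev) := by
    rw [Finset.disjoint_left]
    intro x hx hx'
    obtain ⟨y, hy, rfl⟩ := Finset.mem_image.mp hx'
    have h1 := (Finset.mem_filter.mp hx).2.1
    have h2 := (Finset.mem_filter.mp hy).2.1
    rw [rev_val] at h1
    have := y.isLt
    omega
  rw [himg, Finset.card_union_of_disjoint hd,
    Finset.card_image_of_injective _ Fin.rev_injective]
  omega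

lemma conj_rev (w g : Equiv.Perm (Fin (2*n+1)))
    (hw : ∀ x, w x.rev = (w x).rev) (hg : ∀ x, g x.rev = (g x).rev) :
    ∀ x : Fin (2*n+1), (g * w * g⁻¹) x.rev = ((g * w * g⁻¹) x).rev := by
  intro x
  have hginv : ∀ y : Fin (2*n+1), g⁻¹ y.rev = (g⁻¹ y).rev := by
    intro y
    have := hg (g⁻¹ y)
    rw [Equiv.Perm.apply_inv_self] at this
    have := congrArg (⇑g⁻¹) this
    rw [Equiv.Perm.inv_apply_self] at this
    exact this.symm
  simp only [Equiv.Perm.mul_apply]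
  rw [hginv, hw, hg]

lemma g_ctr_fix (g : Equiv.Perm (Fin (2*n+1))) (hg : ∀ x, g x.rev = (g x).rev) :
    g (ctr n) = ctr n := by
  apply (rev_eq_self n).mp
  rw [← hg, (rev_eq_self n).mpr rfl]

lemma conj_card_B (w g : Equiv.Perm (Fin (2*n+1))) (hg : ∀ x, g x.rev = (g x).rev) :
    (Finset.univ.filter fun x => (g * w * g⁻¹) x = x.rev ∧ x ≠ ctr n).card
      = (Finset.univ.filter fun x => w x = x.rev ∧ x ≠ ctr n).card := by
  have hginv : ∀ y : Fin (2*n+1), g⁻¹ y.rev = (g⁻¹ y).rev := by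
    intro y
    have := hg (g⁻¹ y)
    rw [Equiv.Perm.apply_inv_self] at this
    have := congrArg (⇑g⁻¹) this
    rw [Equiv.Perm.inv_apply_self] at this
    exact this.symm
  apply Finset.card_bij' (i := fun x _ => g⁻¹ x) (j := fun x _ => g x)
  · intro a ha
    simp only [Finset.mem_filter, Finset.mem_univ, true_and] at ha ⊢
    obtain ⟨h1, h2⟩ := ha
    simp only [Equiv.Perm.mul_apply] at h1
    constructor
    · have := congrArg (⇑g⁻¹) h1
      rw [Equiv.Perm.inv_apply_self] at this
      rw [this, hginv]
    · intro h
      apply h2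
      have := congrArg g h
      rw [Equiv.Perm.apply_inv_self, g_ctr_fix n g hg] at this
      exact this
  · intro a ha
    simp only [Finset.mem_filter, Finset.mem_univ, true_and] at ha ⊢
    obtain ⟨h1, h2⟩ := ha
    constructor
    · simp only [Equiv.Perm.mul_apply]
      rw [Equiv.Perm.inv_apply_self, h1, hg]
    · intro h
      apply h2
      have := congrArg (⇑g⁻¹) h
      rw [Equiv.Perm.inv_apply_self] at this
      rw [this]
      apply (rev_eq_self n).mp
      rw [← hginv, (rev_eq_self n).mpr rfl]
  · intro a _; rw [Equiv.Perm.apply_inv_self]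
  · intro a _; rw [Equiv.Perm.inv_apply_self]

lemma conj_card_M (w g : Equiv.Perm (Fin (2*n+1))) (hg : ∀ x, g x.rev = (g x).rev) :
    (Finset.univ.filter fun x => ((g * w * g⁻¹) x ≠ x ∧ (g * w * g⁻¹) x ≠ x.rev) ∧ x ≠ ctr n).card
      = (Finset.univ.filter fun x => (w x ≠ x ∧ w x ≠ x.rev) ∧ x ≠ ctr n).card := by
  have hginv : ∀ y : Fin (2*n+1), g⁻¹ y.rev = (g⁻¹ y).rev := by
    intro y
    have := hg (g⁻¹ y)
    rw [Equiv.Perm.apply_inv_self] at this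
    have := congrArg (⇑g⁻¹) this
    rw [Equiv.Perm.inv_apply_self] at this
    exact this.symm
  apply Finset.card_bij' (i := fun x _ => g⁻¹ x) (j := fun x _ => g x)
  · intro a ha
    simp only [Finset.mem_filter, Finset.mem_univ, true_and] at ha ⊢
    obtain ⟨⟨h1, h1'⟩, h2⟩ := ha
    simp only [Equiv.Perm.mul_apply] at h1 h1'
    refine ⟨⟨?_, ?_⟩, ?_⟩
    · intro h
      apply h1
      have := congrArg g h
      rw [Equiv.Perm.apply_inv_self] at this
      rw [this]
    · intro h
      apply h1'
      have := congrArg g h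
      rw [hg, Equiv.Perm.apply_inv_self] at this
      rw [this]
    · intro h
      apply h2
      have := congrArg g h
      rw [Equiv.Perm.apply_inv_self, g_ctr_fix n g hg] at this
      exact this
  · intro a ha
    simp only [Finset.mem_filter, Finset.mem_univ, true_and] at ha ⊢
    obtain ⟨⟨h1, h1'⟩, h2⟩ := ha
    refine ⟨⟨?_, ?_⟩, ?_⟩
    · simp only [Equiv.Perm.mul_apply]
      rw [Equiv.Perm.inv_apply_self]
      intro h
      apply h1
      have := congrArg (⇑g⁻¹) h
      rwa [Equiv.Perm.inv_apply_self, Equiv.Perm.inv_apply_self] at this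
    · simp only [Equiv.Perm.mul_apply]
      rw [Equiv.Perm.inv_apply_self]
      intro h
      apply h1'
      have := congrArg (⇑g⁻¹) h
      rw [Equiv.Perm.inv_apply_self, hginv, Equiv.Perm.inv_apply_self] at this
      exact this
    · intro h
      apply h2
      have := congrArg (⇑g⁻¹) h
      rw [Equiv.Perm.inv_apply_self] at this
      rw [this]
      apply (rev_eq_self n).mp
      rw [← hginv, (rev_eq_self n).mpr rfl]
  · intro a _; rw [Equiv.Perm.apply_inv_self]
  · intro a _; rw [Equiv.Perm.inv_apply_self]

lemma cA_half_B {k l : ℕ} (hkl : 2*k + l ≤ n) :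
    (Finset.univ.filter fun x : Fin (2*n+1) => x.val < n ∧ cA n k l x = x.rev).card = l := by
  have hset : (Finset.univ.filter fun x : Fin (2*n+1) => x.val < n ∧ cA n k l x = x.rev)
      = (Finset.range l).image (fun i => ((n - (i+1) : ℕ) : Fin (2*n+1))) := by
    ext x
    simp only [Finset.mem_filter, Finset.mem_univ, true_and, Finset.mem_image,
      Finset.mem_range]
    constructor
    · rintro ⟨hv, hx⟩
      obtain ⟨m, hmlt⟩ := x
      have hv' : m < n := hv
      have hvx := congrArg Fin.val hx
      rw [rev_val] at hvx
      have hvm : (⟨m, hmlt⟩ : Fin (2*n+1)).val = m := rfl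
      by_cases c1 : m < 2*k
      · exfalso
        by_cases ce : m % 2 = 0
        · have hm : (⟨m, hmlt⟩ : Fin (2*n+1)) = ((2*(m/2) : ℕ) : Fin (2*n+1)) :=
            pt_eq_of_val (by omega) (by show m = 2*(m/2); omega)
          rw [hm, cA_lo hkl (m/2) (by omega)] at hvx
          rw [pt_val (by omega), pt_val (by omega)] at hvx
          omega
        · have hm : (⟨m, hmlt⟩ : Fin (2*n+1)) = ((2*(m/2)+1 : ℕ) : Fin (2*n+1)) :=
            pt_eq_of_val (by omega) (by show m = 2*(m/2)+1; omega)
          rw [hm, cA_lo' hkl (m/2) (by omega)] at hvx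
          rw [pt_val (by omega), pt_val (by omega)] at hvx
          omega
      · by_cases c2 : m < n - l
        · exfalso
          have hm : (⟨m, hmlt⟩ : Fin (2*n+1)) = ((m : ℕ) : Fin (2*n+1)) :=
            pt_eq_of_val (by omega) rfl
          rw [hm, cA_fix hkl m (by omega) (by omega) (Or.inl (by omega))] at hvx
          omega
        · exact ⟨n - m - 1, by omega, by
            apply Fin.ext
            rw [pt_val (by omega)]
            show n - (n - m - 1 + 1) = m
            omega⟩
    · rintro ⟨i, hi, rfl⟩
      constructor
      · rw [pt_val (by omega)]; omega
      · rw [cA_mid_lo hkl i hi]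
        apply Fin.ext
        rw [pt_val (by omega), rev_val, pt_val (by omega)]
        omega
  rw [hset, Finset.card_image_of_injOn, Finset.card_range]
  intro a ha b hb h
  simp only [Finset.coe_range, Set.mem_Iio] at ha hb
  have := congrArg Fin.val h
  rw [pt_val (by omega), pt_val (by omega)] at this
  omega

lemma cA_half_M {k l : ℕ} (hkl : 2*k + l ≤ n) :
    (Finset.univ.filter fun x : Fin (2*n+1) =>
      x.val < n ∧ cA n k l x ≠ x ∧ cA n k l x ≠ x.rev).card = 2*k := by
  have hset : (Finset.univ.filter fun x : Fin (2*n+1) =>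
        x.val < n ∧ cA n k l x ≠ x ∧ cA n k l x ≠ x.rev)
      = (Finset.range (2*k)).image (fun m => ((m : ℕ) : Fin (2*n+1))) := by
    ext x
    simp only [Finset.mem_filter, Finset.mem_univ, true_and, Finset.mem_image,
      Finset.mem_range]
    constructor
    · rintro ⟨hv, hx1, hx2⟩
      obtain ⟨m, hmlt⟩ := x
      have hv' : m < n := hv
      by_cases c1 : m < 2*k
      · exact ⟨m, c1, by apply Fin.ext; rw [pt_val (by omega)]⟩
      · exfalso
        by_cases c2 : m < n - l
        · apply hx1
          have hm : (⟨m, hmlt⟩ : Fin (2*n+1)) = ((m : ℕ) : Fin (2*n+1)) :=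
            pt_eq_of_val (by omega) rfl
          rw [hm, cA_fix hkl m (by omega) (by omega) (Or.inl (by omega))]
        · apply hx2
          have hm : (⟨m, hmlt⟩ : Fin (2*n+1)) = ((n - (n - m - 1 + 1) : ℕ) : Fin (2*n+1)) :=
            pt_eq_of_val (by omega) (by show m = n - (n - m - 1 + 1); omega)
          rw [hm, cA_mid_lo hkl (n - m - 1) (by omega)]
          apply Fin.ext
          rw [pt_val (by omega), rev_val, pt_val (by omega)]
          omega
    · rintro ⟨m', hm', rfl⟩
      refine ⟨by rw [pt_val (by omega)]; omega, ?_, ?_⟩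
      · by_cases ce : m' % 2 = 0
        · have hm : ((m' : ℕ) : Fin (2*n+1)) = ((2*(m'/2) : ℕ) : Fin (2*n+1)) := by
            congr 1; omega
          rw [hm, cA_lo hkl (m'/2) (by omega)]
          exact pt_ne (by omega) (by omega) (by omega)
        · have hm : ((m' : ℕ) : Fin (2*n+1)) = ((2*(m'/2)+1 : ℕ) : Fin (2*n+1)) := by
            congr 1; omega
          rw [hm, cA_lo' hkl (m'/2) (by omega)]
          exact pt_ne (by omega) (by omega) (by omega)
      · by_cases ce : m' % 2 = 0
        · have hm : ((m' : ℕ) : Fin (2*n+1)) = ((2*(m'/2) : ℕ) : Fin (2*n+1)) := by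
            congr 1; omega
          rw [hm, cA_lo hkl (m'/2) (by omega)]
          intro h
          have := congrArg Fin.val h
          rw [pt_val (by omega), rev_val, pt_val (by omega)] at this
          omega
        · have hm : ((m' : ℕ) : Fin (2*n+1)) = ((2*(m'/2)+1 : ℕ) : Fin (2*n+1)) := by
            congr 1; omega
          rw [hm, cA_lo' hkl (m'/2) (by omega)]
          intro h
          have := congrArg Fin.val h
          rw [pt_val (by omega), rev_val, pt_val (by omega)] at this
          omega
  rw [hset, Finset.card_image_of_injOn, Finset.card_range]
  intro a ha b hb h
  simp only [Finset.coe_range, Set.mem_Iio] at ha hb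
  have := congrArg Fin.val h
  rw [pt_val (by omega), pt_val (by omega)] at this
  omega

lemma QB_symm (w : Equiv.Perm (Fin (2*n+1))) (hw : ∀ x, w x.rev = (w x).rev) :
    ∀ x : Fin (2*n+1), (w x.rev = x.rev.rev) ↔ (w x = x.rev) := by
  intro x
  rw [hw, Fin.rev_rev]
  constructor
  · intro h
    have := congrArg Fin.rev h
    rwa [Fin.rev_rev] at this
  · intro h
    rw [h, Fin.rev_rev]

lemma QM_symm (w : Equiv.Perm (Fin (2*n+1))) (hw : ∀ x, w x.rev = (w x).rev) :
    ∀ x : Fin (2*n+1), (w x.rev ≠ x.rev ∧ w x.rev ≠ x.rev.rev) ↔ (w x ≠ x ∧ w x ≠ x.rev) := by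
  intro x
  rw [hw, Fin.rev_rev]
  constructor
  · rintro ⟨ha, hb⟩
    refine ⟨fun h => ha (by rw [h]), fun h => hb (by rw [h, Fin.rev_rev])⟩
  · rintro ⟨ha, hb⟩
    refine ⟨fun h => ha ?_, fun h => hb ?_⟩
    · have := congrArg Fin.rev h
      rwa [Fin.rev_rev, Fin.rev_rev] at this
    · have := congrArg Fin.rev h
      rwa [Fin.rev_rev] at this

end main

/-- The longest element `w₀` of the symmetric group on `{0, 1, …, 2n}`:
the reversal `i ↦ 2n − i`. -/
def wA (n : ℕ) : Equiv.Perm (Fin (2 * n + 1)) := Fin.revPerm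

/-- For every permutation `u` of `{0,1,…,2n}` with `u² = 1` and `u ∘ w₀ = w₀ ∘ u`, there
exists exactly one pair `(k,l)` of integers with `k, l ≥ 0` and `2k + l ≤ n` such that
`u = g ∘ c_{k,l} ∘ g⁻¹` for some permutation `g` of `{0,1,…,2n}` commuting with `w₀`. -/
theorem stmt3 (n : ℕ) (hn : 1 ≤ n)
    (u : Equiv.Perm (Fin (2 * n + 1)))
    (hu2 : u * u = 1)
    (hucomm : u * wA n = wA n * u) :
    ∃! p : ℕ × ℕ, 2 * p.1 + p.2 ≤ n ∧
      ∃ g : Equiv.Perm (Fin (2 * n + 1)),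
        g * wA n = wA n * g ∧ u = g * cA n p.1 p.2 * g⁻¹ := by
  have h2 : ∀ x, u (u x) = x := by
    intro x
    have := congrArg (fun (p : Equiv.Perm (Fin (2*n+1))) => p x) hu2
    simpa using this
  have hc : ∀ x : Fin (2*n+1), u x.rev = (u x).rev := by
    intro x
    have := congrArg (fun (p : Equiv.Perm (Fin (2*n+1))) => p x) hucomm
    simpa [wA] using this
  have hbij : Function.Bijective (G n u) :=
    Finite.injective_iff_bijective.mp (G_inj n u h2 hc)
  set g : Equiv.Perm (Fin (2*n+1)) := Equiv.ofBijective _ hbij with hgdef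
  have hgrev : ∀ x : Fin (2*n+1), g x.rev = (g x).rev := fun x => G_rev n u h2 hc x
  have hgcomm : g * wA n = wA n * g := by
    apply Equiv.ext
    intro x
    simp only [Equiv.Perm.mul_apply, wA, Fin.revPerm_apply]
    exact hgrev x
  have hgc : g * cA n (Mplus n u).card (Bset n u).card = u * g := by
    apply Equiv.ext
    intro x
    simp only [Equiv.Perm.mul_apply]
    exact G_intertwine n u h2 hc x
  have hucA : u = g * cA n (Mplus n u).card (Bset n u).card * g⁻¹ := by
    rw [hgc, mul_inv_cancel_right]
  have hBu : (Finset.univ.filter fun x => u x = x.rev ∧ x ≠ ctr n).card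
      = 2 * (Bset n u).card := full_half n (fun x => u x = x.rev) (QB_symm n u hc)
  have hMu : (Finset.univ.filter fun x => (u x ≠ x ∧ u x ≠ x.rev) ∧ x ≠ ctr n).card
      = 2 * (Mset n u).card :=
    full_half n (fun x => u x ≠ x ∧ u x ≠ x.rev) (QM_symm n u hc)
  refine ⟨⟨(Mplus n u).card, (Bset n u).card⟩, ⟨hKL n u h2 hc, g, hgcomm, hucA⟩, ?_⟩
  rintro ⟨k', l'⟩ ⟨hq, g', hg'comm, hconj⟩
  have hg'rev : ∀ x : Fin (2*n+1), g' x.rev = (g' x).rev := by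
    intro x
    have := congrArg (fun (p : Equiv.Perm (Fin (2*n+1))) => p x) hg'comm
    simpa [wA] using this
  have hcAform : cA n k' l' = g'⁻¹ * u * g'⁻¹⁻¹ := by
    rw [hconj]
    group
  have hg'invrev : ∀ x : Fin (2*n+1), g'⁻¹ x.rev = (g'⁻¹ x).rev := by
    intro y
    have := hg'rev (g'⁻¹ y)
    rw [Equiv.Perm.apply_inv_self] at this
    have := congrArg (⇑g'⁻¹) this
    rw [Equiv.Perm.inv_apply_self] at this
    exact this.symm
  have hcArev : ∀ x : Fin (2*n+1), (cA n k' l') x.rev = ((cA n k' l') x).rev := by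
    rw [hcAform]
    exact conj_rev n u g'⁻¹ hc hg'invrev
  have hB1 : (Finset.univ.filter fun x => u x = x.rev ∧ x ≠ ctr n).card
      = (Finset.univ.filter fun x => (cA n k' l') x = x.rev ∧ x ≠ ctr n).card := by
    rw [hconj]
    exact conj_card_B n (cA n k' l') g' hg'rev
  have hB2 : (Finset.univ.filter fun x => (cA n k' l') x = x.rev ∧ x ≠ ctr n).card
      = 2 * l' := by
    rw [full_half n (fun x => (cA n k' l') x = x.rev) (QB_symm n _ hcArev),
      cA_half_B n hq]
  have hM1 : (Finset.univ.filter fun x => (u x ≠ x ∧ u x ≠ x.rev) ∧ x ≠ ctr n).card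
      = (Finset.univ.filter fun x =>
          ((cA n k' l') x ≠ x ∧ (cA n k' l') x ≠ x.rev) ∧ x ≠ ctr n).card := by
    rw [hconj]
    exact conj_card_M n (cA n k' l') g' hg'rev
  have hM2 : (Finset.univ.filter fun x =>
        ((cA n k' l') x ≠ x ∧ (cA n k' l') x ≠ x.rev) ∧ x ≠ ctr n).card
      = 2 * (2 * k') := by
    rw [full_half n (fun x => (cA n k' l') x ≠ x ∧ (cA n k' l') x ≠ x.rev)
      (QM_symm n _ hcArev), cA_half_M n hq]
  have hMcard := card_Mset n u h2 hc
  simp only [Prod.mk.injEq]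
  constructor
  · omega
  · omega
end

section
/- For all integers k,l ≥ 0 with 2k + l ≤ n, the permutation w₀ ∘ c_{k,l} is an involution and is conjugate to c_{k, n−2k−l} by an element of the centralizer of w₀ in S_{2n+1}; that is, there exists g ∈ S_{2n+1} with g∘w₀ = w₀∘g and w₀ ∘ c_{k,l} = g ∘ c_{k,n−2k−l} ∘ g⁻¹. -/
set_option maxHeartbeats 1600000

open Fin.NatCast
/- ### Auxiliary machinery -/

lemma swap_val {N : ℕ} (a b : ℕ) (ha : a < N + 1) (hb : b < N + 1) (x : Fin (N + 1)) :
    ((Equiv.swap (a : Fin (N + 1)) (b : Fin (N + 1))) x).val =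
      if x.val = a then b else if x.val = b then a else x.val := by
  have ha' : ((a : Fin (N + 1)) : ℕ) = a := Fin.val_cast_of_lt ha
  have hb' : ((b : Fin (N + 1)) : ℕ) = b := Fin.val_cast_of_lt hb
  rw [Equiv.swap_apply_def]
  by_cases h1 : x = (a : Fin (N + 1))
  · have : x.val = a := by rw [h1, ha']
    simp only [if_pos h1, if_pos this, hb']
  · have h1' : ¬ x.val = a := fun h => h1 (Fin.ext (by rw [h, ha']))
    by_cases h2 : x = (b : Fin (N + 1))
    · have : x.val = b := by rw [h2, hb']
      simp only [if_neg h1, if_pos h2, if_neg h1', if_pos this, ha']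
    · have h2' : ¬ x.val = b := fun h => h2 (Fin.ext (by rw [h, hb']))
      simp only [if_neg h1, if_neg h2, if_neg h1', if_neg h2']

def Pprod (n l : ℕ) : Equiv.Perm (Fin (2 * n + 1)) :=
  ((List.range l).map fun i =>
      Equiv.swap ((n - (i + 1) : ℕ) : Fin (2 * n + 1))
        ((n + (i + 1) : ℕ) : Fin (2 * n + 1))).prod

def Qprod (n k : ℕ) : Equiv.Perm (Fin (2 * n + 1)) :=
  ((List.range k).map fun j =>
      Equiv.swap ((2 * j : ℕ) : Fin (2 * n + 1)) ((2 * j + 1 : ℕ) : Fin (2 * n + 1)) *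
      Equiv.swap ((2 * n - 2 * j - 1 : ℕ) : Fin (2 * n + 1))
        ((2 * n - 2 * j : ℕ) : Fin (2 * n + 1))).prod

def pfun (n l x : ℕ) : ℕ := if n - l ≤ x ∧ x ≤ n + l then 2 * n - x else x

def qfun (n k x : ℕ) : ℕ :=
  if x < 2 * k then (if x % 2 = 0 then x + 1 else x - 1)
  else if 2 * n - 2 * k < x then (if x % 2 = 0 then x - 1 else x + 1)
  else x

/-- Pointwise description of `w₀ * c_{k,l}`. -/
def hfun (n k l x : ℕ) : ℕ :=
  if x < 2 * k then (if x % 2 = 0 then 2 * n - x - 1 else 2 * n - x + 1)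
  else if 2 * n - 2 * k < x then (if x % 2 = 0 then 2 * n - x + 1 else 2 * n - x - 1)
  else if n - l ≤ x ∧ x ≤ n + l then x
  else 2 * n - x

/-- Pointwise description of the conjugating element `g`. -/
def gfun (n k l x : ℕ) : ℕ :=
  if x < 2 * k ∨ 2 * n - 2 * k < x then (if x % 2 = 0 then x else 2 * n - x)
  else if x < 2 * k + l then x + (n - 2 * k - l)
  else if 2 * n - 2 * k - l < x then x - (n - 2 * k - l)
  else if x < n then x - l
  else if n < x then x + l
  else n

/-- Pointwise description of `g⁻¹`. -/
def gifun (n k l x : ℕ) : ℕ :=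
  if x < 2 * k ∨ 2 * n - 2 * k < x then (if x % 2 = 0 then x else 2 * n - x)
  else if x < n - l then x + l
  else if x < n then x - (n - 2 * k - l)
  else if x = n then n
  else if x ≤ n + l then x + (n - 2 * k - l)
  else x - l

lemma Pval (n : ℕ) : ∀ (l : ℕ), l ≤ n → ∀ x : Fin (2 * n + 1),
    ((Pprod n l) x).val = pfun n l x.val := by
  intro l
  induction l with
  | zero =>
    intro _ x
    have hx := x.isLt
    simp only [Pprod, List.range_zero, List.map_nil, List.prod_nil, Equiv.Perm.coe_one, id_eq,
      pfun]
    split_ifs <;> omega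
  | succ l ih =>
    intro hl x
    have hx := x.isLt
    have hstep : Pprod n (l + 1) = Pprod n l *
        Equiv.swap ((n - (l + 1) : ℕ) : Fin (2 * n + 1)) ((n + (l + 1) : ℕ) : Fin (2 * n + 1)) := by
      simp [Pprod, List.range_succ]
    rw [hstep, Equiv.Perm.mul_apply, ih (by omega)]
    rw [swap_val (N := 2 * n) (n - (l + 1)) (n + (l + 1)) (by omega) (by omega)]
    simp only [pfun]
    split_ifs <;> omega

lemma Qval (n : ℕ) : ∀ (k : ℕ), 2 * k ≤ n → ∀ x : Fin (2 * n + 1),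
    ((Qprod n k) x).val = qfun n k x.val := by
  intro k
  induction k with
  | zero =>
    intro _ x
    have hx := x.isLt
    simp only [Qprod, List.range_zero, List.map_nil, List.prod_nil, Equiv.Perm.coe_one, id_eq,
      qfun]
    split_ifs <;> omega
  | succ k ih =>
    intro hk x
    have hx := x.isLt
    have hstep : Qprod n (k + 1) = Qprod n k *
        (Equiv.swap ((2 * k : ℕ) : Fin (2 * n + 1)) ((2 * k + 1 : ℕ) : Fin (2 * n + 1)) *
         Equiv.swap ((2 * n - 2 * k - 1 : ℕ) : Fin (2 * n + 1))
           ((2 * n - 2 * k : ℕ) : Fin (2 * n + 1))) := by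
      simp [Qprod, List.range_succ]
    rw [hstep, Equiv.Perm.mul_apply, Equiv.Perm.mul_apply, ih (by omega)]
    rw [swap_val (N := 2 * n) (2 * k) (2 * k + 1) (by omega) (by omega)]
    rw [swap_val (N := 2 * n) (2 * n - 2 * k - 1) (2 * n - 2 * k) (by omega) (by omega)]
    simp only [qfun]
    split_ifs <;> omega

lemma cval {n k l : ℕ} (hkl : 2 * k + l ≤ n) (x : Fin (2 * n + 1)) :
    ((cA n k l) x).val = qfun n k (pfun n l x.val) := by
  have h1 : cA n k l = Qprod n k * Pprod n l := rfl
  rw [h1, Equiv.Perm.mul_apply, Qval n k (by omega), Pval n l (by omega)]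

lemma wval {n : ℕ} (x : Fin (2 * n + 1)) : ((wA n) x).val = 2 * n - x.val := by
  have := x.isLt
  simp only [wA, Fin.revPerm_apply, Fin.val_rev]
  omega

lemma hval {n k l : ℕ} (hkl : 2 * k + l ≤ n) {v : ℕ} (hv : v ≤ 2 * n) :
    2 * n - qfun n k (pfun n l v) = hfun n k l v := by
  simp only [pfun]
  split_ifs with h <;>
  · simp only [qfun, hfun]
    split_ifs <;> omega

lemma hfun_le {n k l v : ℕ} (hkl : 2 * k + l ≤ n) (hv : v ≤ 2 * n) : hfun n k l v ≤ 2 * n := by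
  simp only [hfun]; split_ifs <;> omega

lemma hfun_invol {n k l v : ℕ} (hkl : 2 * k + l ≤ n) (hv : v ≤ 2 * n) :
    hfun n k l (hfun n k l v) = v := by
  simp only [hfun]
  split_ifs <;> omega

lemma gfun_le {n k l x : ℕ} (h : 2 * k + l ≤ n) (hx : x ≤ 2 * n) : gfun n k l x ≤ 2 * n := by
  simp only [gfun]; split_ifs <;> omega

lemma gifun_le {n k l x : ℕ} (h : 2 * k + l ≤ n) (hx : x ≤ 2 * n) : gifun n k l x ≤ 2 * n := by
  simp only [gifun]; split_ifs <;> omega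

lemma gifun_gfun {n k l x : ℕ} (h : 2 * k + l ≤ n) (hx : x ≤ 2 * n) :
    gifun n k l (gfun n k l x) = x := by
  simp only [gfun]
  split_ifs <;>
  · simp only [gifun]
    split_ifs <;> omega

lemma gfun_gifun {n k l x : ℕ} (h : 2 * k + l ≤ n) (hx : x ≤ 2 * n) :
    gfun n k l (gifun n k l x) = x := by
  simp only [gifun]
  split_ifs <;>
  · simp only [gfun]
    split_ifs <;> omega

lemma gfun_rev {n k l x : ℕ} (h : 2 * k + l ≤ n) (hx : x ≤ 2 * n) :
    gfun n k l (2 * n - x) = 2 * n - gfun n k l x := by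
  simp only [gfun]
  split_ifs <;> omega

/-- Pointwise description of both `w₀ c_{k,l} g` and `g c_{k,n-2k-l}`. -/
def tfun (n k l v : ℕ) : ℕ :=
  if v < 2 * k then (if v % 2 = 0 then 2 * n - v - 1 else v - 1)
  else if 2 * n - 2 * k < v then (if v % 2 = 0 then 2 * n - v + 1 else v + 1)
  else if v < 2 * k + l then v + (n - 2 * k - l)
  else if 2 * n - 2 * k - l < v then v - (n - 2 * k - l)
  else if v < n then 2 * n - v + l
  else if n < v then 2 * n - v - l
  else n

lemma hg {n k l : ℕ} (hkl : 2 * k + l ≤ n) {v : ℕ} (hv : v ≤ 2 * n) :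
    hfun n k l (gfun n k l v) = tfun n k l v := by
  simp only [gfun]
  split_ifs <;>
  · simp only [hfun, tfun]
    split_ifs <;> omega

lemma gq {n k l : ℕ} (hkl : 2 * k + l ≤ n) {v : ℕ} (hv : v ≤ 2 * n) :
    gfun n k l (qfun n k (pfun n (n - 2 * k - l) v)) = tfun n k l v := by
  simp only [pfun]
  split_ifs with h <;>
  · simp only [qfun]
    split_ifs <;>
    · simp only [gfun, tfun]
      split_ifs <;> omega

lemma key {n k l : ℕ} (hkl : 2 * k + l ≤ n) {v : ℕ} (hv : v ≤ 2 * n) :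
    hfun n k l (gfun n k l v) = gfun n k l (qfun n k (pfun n (n - 2 * k - l) v)) := by
  rw [hg hkl hv, gq hkl hv]

/-- For all integers `k, l ≥ 0` with `2k + l ≤ n`, the permutation `w₀ ∘ c_{k,l}` is an
involution and is conjugate to `c_{k, n−2k−l}` by an element of the centralizer of `w₀`
in `S_{2n+1}`. -/
theorem stmt4 (n : ℕ) (hn : 1 ≤ n) (k l : ℕ) (hkl : 2 * k + l ≤ n) :
    (wA n * cA n k l) * (wA n * cA n k l) = 1 ∧
    ∃ g : Equiv.Perm (Fin (2 * n + 1)),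
      g * wA n = wA n * g ∧ wA n * cA n k l = g * cA n k (n - 2 * k - l) * g⁻¹ := by
  have hkm : 2 * k + (n - 2 * k - l) ≤ n := by omega
  constructor
  · ext x
    have hx : x.val ≤ 2 * n := by omega
    simp only [Equiv.Perm.mul_apply, Equiv.Perm.one_apply, Fin.ext_iff, wval, cval hkl]
    rw [hval hkl hx, hval hkl (hfun_le hkl hx)]
    exact hfun_invol hkl hx
  · refine ⟨⟨fun x => ⟨gfun n k l x.val,
        by have := gfun_le hkl (by omega : x.val ≤ 2 * n); omega⟩,
      fun x => ⟨gifun n k l x.val,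
        by have := gifun_le hkl (by omega : x.val ≤ 2 * n); omega⟩,
      fun x => Fin.ext (gifun_gfun hkl (by omega : x.val ≤ 2 * n)),
      fun x => Fin.ext (gfun_gifun hkl (by omega : x.val ≤ 2 * n))⟩, ?_, ?_⟩
    · ext x
      have hx : x.val ≤ 2 * n := by omega
      simp only [Equiv.Perm.mul_apply, Fin.ext_iff, wval, Equiv.coe_fn_mk]
      exact gfun_rev hkl hx
    · have H : (wA n * cA n k l) *
          (⟨fun x => ⟨gfun n k l x.val, by have := gfun_le hkl (by omega : x.val ≤ 2 * n); omega⟩,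
            fun x => ⟨gifun n k l x.val, by have := gifun_le hkl (by omega : x.val ≤ 2 * n); omega⟩,
            fun x => Fin.ext (gifun_gfun hkl (by omega : x.val ≤ 2 * n)),
            fun x => Fin.ext (gfun_gifun hkl (by omega : x.val ≤ 2 * n))⟩ :
              Equiv.Perm (Fin (2 * n + 1))) =
          (⟨fun x => ⟨gfun n k l x.val, by have := gfun_le hkl (by omega : x.val ≤ 2 * n); omega⟩,
            fun x => ⟨gifun n k l x.val, by have := gifun_le hkl (by omega : x.val ≤ 2 * n); omega⟩,
            fun x => Fin.ext (gifun_gfun hkl (by omega : x.val ≤ 2 * n)),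
            fun x => Fin.ext (gfun_gifun hkl (by omega : x.val ≤ 2 * n))⟩ :
              Equiv.Perm (Fin (2 * n + 1))) * cA n k (n - 2 * k - l) := by
        ext x
        have hx : x.val ≤ 2 * n := by omega
        simp only [Equiv.Perm.mul_apply, Fin.ext_iff, wval, cval hkl, cval hkm,
          Equiv.coe_fn_mk]
        rw [hval hkl (gfun_le hkl hx)]
        exact key hkl hx
      rw [← H, mul_assoc, mul_inv_cancel, mul_one]
end

section
/- For all integers k,l ≥ 0 with 2k + l ≤ n, the permutation w₀ ∘ c_{k,l} is an involution and is conjugate to c_{k, n−2k−l} by an element of the centralizer of w₀ in S_{2n}; that is, there exists g ∈ S_{2n} with g∘w₀ = w₀∘g and w₀ ∘ c_{k,l} = g ∘ c_{k,n−2k−l} ∘ g⁻¹. -/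
open Fin.NatCast

/-- The involution `c_{k,l}` in the symmetric group on `{0, 1, …, 2n−1}`: it swaps
`2j ↔ 2j+1` and `2n−2−2j ↔ 2n−1−2j` for each `0 ≤ j < k`, swaps `n−1−i ↔ n+i` for each
integer `i` with `0 ≤ i < l`, and fixes all other points.  (Here it is written as a
product of the corresponding disjoint transpositions.) -/
def cA' (n : ℕ) (hn : 0 < n) (k l : ℕ) : Equiv.Perm (Fin (2 * n)) :=
  haveI : NeZero (2 * n) := ⟨by omega⟩
  (((List.range k).map fun j =>
      Equiv.swap ((2 * j : ℕ) : Fin (2 * n)) ((2 * j + 1 : ℕ) : Fin (2 * n)) *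
      Equiv.swap ((2 * n - 2 - 2 * j : ℕ) : Fin (2 * n))
        ((2 * n - 1 - 2 * j : ℕ) : Fin (2 * n))).prod) *
  (((List.range l).map fun i =>
      Equiv.swap ((n - 1 - i : ℕ) : Fin (2 * n)) ((n + i : ℕ) : Fin (2 * n))).prod)

/-- The longest element `w₀` of the symmetric group on `{0, 1, …, 2n−1}`:
the reversal `i ↦ 2n−1−i`. -/
def wA' (n : ℕ) : Equiv.Perm (Fin (2 * n)) := Fin.revPerm



section helpers
variable {α : Type*}

lemma prodFix (f : ℕ → Equiv.Perm α) (k : ℕ) (x : α) (h : ∀ j < k, f j x = x) :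
    (((List.range k).map f).prod) x = x := by
  induction k with
  | zero => simp
  | succ m ih =>
    rw [List.range_succ, List.map_append, List.prod_append]
    simp only [List.map_cons, List.map_nil, List.prod_cons, List.prod_nil, mul_one]
    rw [Equiv.Perm.mul_apply, h m (Nat.lt_succ_self m),
      ih (fun j hj => h j (hj.trans (Nat.lt_succ_self m)))]

lemma prodMove (f : ℕ → Equiv.Perm α) (k : ℕ) (i : ℕ) (hik : i < k) (x y : α)
    (hx : f i x = y) (hfx : ∀ j < k, j ≠ i → f j x = x)
    (hfy : ∀ j < k, j ≠ i → f j y = y) :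
    (((List.range k).map f).prod) x = y := by
  induction k with
  | zero => omega
  | succ m ih =>
    rw [List.range_succ, List.map_append, List.prod_append]
    simp only [List.map_cons, List.map_nil, List.prod_cons, List.prod_nil, mul_one]
    rw [Equiv.Perm.mul_apply]
    by_cases him : i = m
    · subst him
      rw [hx]
      exact prodFix f i y (fun j hj => hfy j (hj.trans (Nat.lt_succ_self i)) (by omega))
    · rw [hfx m (Nat.lt_succ_self m) (fun h => him h.symm)]
      exact ih (by omega) (fun j hj hji => hfx j (hj.trans (Nat.lt_succ_self m)) hji)
        (fun j hj hji => hfy j (hj.trans (Nat.lt_succ_self m)) hji)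

lemma swap_apply_val {N : ℕ} [NeZero N] {a b : ℕ} (ha : a < N) (hb : b < N) (x : Fin N) :
    ((Equiv.swap (a : Fin N) (b : Fin N)) x).val =
      if x.val = a then b else if x.val = b then a else x.val := by
  rw [Equiv.swap_apply_def]
  split_ifs with h1 h2 h3 h4 h5 h6 <;>
    simp_all [Fin.ext_iff, Fin.val_natCast, Nat.mod_eq_of_lt ha, Nat.mod_eq_of_lt hb]

end helpers

section vals
variable {n : ℕ} [NeZero (2 * n)]

/-- value of one `f1 j` factor -/
lemma f1_apply_val (h2 : 2 ≤ n) {k : ℕ} (hk : 2 * k ≤ n) {j : ℕ} (hj : j < k)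
    (x : Fin (2 * n)) :
    ((Equiv.swap ((2 * j : ℕ) : Fin (2 * n)) ((2 * j + 1 : ℕ) : Fin (2 * n)) *
      Equiv.swap ((2 * n - 2 - 2 * j : ℕ) : Fin (2 * n))
        ((2 * n - 1 - 2 * j : ℕ) : Fin (2 * n))) x).val =
      if x.val = 2 * j then 2 * j + 1
      else if x.val = 2 * j + 1 then 2 * j
      else if x.val = 2 * n - 2 - 2 * j then 2 * n - 1 - 2 * j
      else if x.val = 2 * n - 1 - 2 * j then 2 * n - 2 - 2 * j
      else x.val := by
  rw [Equiv.Perm.mul_apply]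
  rw [swap_apply_val (a := 2 * j) (b := 2 * j + 1) (by omega) (by omega)]
  rw [swap_apply_val (a := 2 * n - 2 - 2 * j) (b := 2 * n - 1 - 2 * j) (by omega) (by omega)]
  split_ifs <;> omega

lemma f2_apply_val (h2 : 2 ≤ n) {l : ℕ} (hl : l ≤ n) {i : ℕ} (hi : i < l)
    (x : Fin (2 * n)) :
    ((Equiv.swap ((n - 1 - i : ℕ) : Fin (2 * n)) ((n + i : ℕ) : Fin (2 * n))) x).val =
      if x.val = n - 1 - i then n + i
      else if x.val = n + i then n - 1 - i
      else x.val := by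
  rw [swap_apply_val (a := n - 1 - i) (b := n + i) (by omega) (by omega)]

end vals

section prods
variable {n : ℕ} [NeZero (2 * n)]

lemma P2_val (h2 : 2 ≤ n) {l : ℕ} (hl : l ≤ n) (x : Fin (2 * n)) :
    ((((List.range l).map fun i =>
        Equiv.swap ((n - 1 - i : ℕ) : Fin (2 * n)) ((n + i : ℕ) : Fin (2 * n))).prod) x).val =
      if n - l ≤ x.val ∧ x.val < n + l then 2 * n - 1 - x.val else x.val := by
  have hx2 := x.isLt
  by_cases hb : n - l ≤ x.val ∧ x.val < n + l
  · rw [if_pos hb]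
    have hy : (2 * n - 1 - x.val) < 2 * n := by omega
    by_cases hxn : x.val < n
    · have hil : n - 1 - x.val < l := by omega
      rw [prodMove _ l (n - 1 - x.val) hil x ⟨2 * n - 1 - x.val, hy⟩]
      · apply Fin.val_injective
        rw [f2_apply_val h2 hl hil]
        simp only [Fin.val_mk]
        split_ifs <;> omega
      · intro j hj hji
        apply Fin.val_injective
        rw [f2_apply_val h2 hl hj]
        split_ifs <;> omega
      · intro j hj hji
        apply Fin.val_injective
        rw [f2_apply_val h2 hl hj]
        simp only [Fin.val_mk]
        split_ifs <;> omega
    · have hil : x.val - n < l := by omega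
      rw [prodMove _ l (x.val - n) hil x ⟨2 * n - 1 - x.val, hy⟩]
      · apply Fin.val_injective
        rw [f2_apply_val h2 hl hil]
        simp only [Fin.val_mk]
        split_ifs <;> omega
      · intro j hj hji
        apply Fin.val_injective
        rw [f2_apply_val h2 hl hj]
        split_ifs <;> omega
      · intro j hj hji
        apply Fin.val_injective
        rw [f2_apply_val h2 hl hj]
        simp only [Fin.val_mk]
        split_ifs <;> omega
  · rw [if_neg hb, prodFix]
    intro j hj
    apply Fin.val_injective
    rw [f2_apply_val h2 hl hj]
    split_ifs <;> omega

lemma P1_val (h2 : 2 ≤ n) {k : ℕ} (hk : 2 * k ≤ n) (x : Fin (2 * n)) :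
    ((((List.range k).map fun j =>
        Equiv.swap ((2 * j : ℕ) : Fin (2 * n)) ((2 * j + 1 : ℕ) : Fin (2 * n)) *
        Equiv.swap ((2 * n - 2 - 2 * j : ℕ) : Fin (2 * n))
          ((2 * n - 1 - 2 * j : ℕ) : Fin (2 * n))).prod) x).val =
      if x.val < 2 * k ∨ 2 * n - 2 * k ≤ x.val then
        (if x.val % 2 = 0 then x.val + 1 else x.val - 1)
      else x.val := by
  have hx2 := x.isLt
  by_cases hlo : x.val < 2 * k
  · rw [if_pos (Or.inl hlo)]
    have hjk : x.val / 2 < k := by omega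
    by_cases hpar : x.val % 2 = 0
    · rw [if_pos hpar]
      have hy : x.val + 1 < 2 * n := by omega
      rw [prodMove _ k (x.val / 2) hjk x ⟨x.val + 1, hy⟩]
      · apply Fin.val_injective
        rw [f1_apply_val h2 hk hjk]
        simp only [Fin.val_mk]
        split_ifs <;> omega
      · intro j hj hji
        apply Fin.val_injective
        rw [f1_apply_val h2 hk hj]
        split_ifs <;> omega
      · intro j hj hji
        apply Fin.val_injective
        rw [f1_apply_val h2 hk hj]
        simp only [Fin.val_mk]
        split_ifs <;> omega
    · rw [if_neg hpar]
      have hy : x.val - 1 < 2 * n := by omega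
      rw [prodMove _ k (x.val / 2) hjk x ⟨x.val - 1, hy⟩]
      · apply Fin.val_injective
        rw [f1_apply_val h2 hk hjk]
        simp only [Fin.val_mk]
        split_ifs <;> omega
      · intro j hj hji
        apply Fin.val_injective
        rw [f1_apply_val h2 hk hj]
        split_ifs <;> omega
      · intro j hj hji
        apply Fin.val_injective
        rw [f1_apply_val h2 hk hj]
        simp only [Fin.val_mk]
        split_ifs <;> omega
  · by_cases hhi : 2 * n - 2 * k ≤ x.val
    · rw [if_pos (Or.inr hhi)]
      have hjk : (2 * n - 1 - x.val) / 2 < k := by omega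
      by_cases hpar : x.val % 2 = 0
      · rw [if_pos hpar]
        have hy : x.val + 1 < 2 * n := by omega
        rw [prodMove _ k ((2 * n - 1 - x.val) / 2) hjk x ⟨x.val + 1, hy⟩]
        · apply Fin.val_injective
          rw [f1_apply_val h2 hk hjk]
          simp only [Fin.val_mk]
          split_ifs <;> omega
        · intro j hj hji
          apply Fin.val_injective
          rw [f1_apply_val h2 hk hj]
          split_ifs <;> omega
        · intro j hj hji
          apply Fin.val_injective
          rw [f1_apply_val h2 hk hj]
          simp only [Fin.val_mk]
          split_ifs <;> omega
      · rw [if_neg hpar]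
        have hy : x.val - 1 < 2 * n := by omega
        rw [prodMove _ k ((2 * n - 1 - x.val) / 2) hjk x ⟨x.val - 1, hy⟩]
        · apply Fin.val_injective
          rw [f1_apply_val h2 hk hjk]
          simp only [Fin.val_mk]
          split_ifs <;> omega
        · intro j hj hji
          apply Fin.val_injective
          rw [f1_apply_val h2 hk hj]
          split_ifs <;> omega
        · intro j hj hji
          apply Fin.val_injective
          rw [f1_apply_val h2 hk hj]
          simp only [Fin.val_mk]
          split_ifs <;> omega
    · rw [if_neg (show ¬(x.val < 2 * k ∨ 2 * n - 2 * k ≤ x.val) by omega)]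
      rw [prodFix]
      intro j hj
      apply Fin.val_injective
      rw [f1_apply_val h2 hk hj]
      split_ifs <;> omega

end prods

def cf (n k l x : ℕ) : ℕ :=
  if x < 2 * k ∨ 2 * n - 2 * k ≤ x then (if x % 2 = 0 then x + 1 else x - 1)
  else if n - l ≤ x ∧ x < n + l then 2 * n - 1 - x
  else x

lemma cA'_val (n : ℕ) (hn : 0 < n) (h2 : 2 ≤ n) (k l : ℕ) (hkl : 2 * k + l ≤ n)
    (x : Fin (2 * n)) : (cA' n hn k l x).val = cf n k l x.val := by
  haveI : NeZero (2 * n) := ⟨by omega⟩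
  have hx2 := x.isLt
  rw [cA', Equiv.Perm.mul_apply]
  rw [P1_val h2 (by omega)]
  rw [P2_val h2 (by omega)]
  rw [cf]
  split_ifs <;> omega

def gf (n k l x : ℕ) : ℕ :=
  if x < 2 * k then (if x % 2 = 0 then x else 2 * n - 1 - x)
  else if 2 * n - 2 * k ≤ x then (if x % 2 = 0 then 2 * n - 1 - x else x)
  else if x < 2 * k + l then x + (n - 2 * k - l)
  else if x < n then x - l
  else if x < 2 * n - 2 * k - l then x + l
  else x - (n - 2 * k - l)

def gif (n k l x : ℕ) : ℕ :=
  if x < 2 * k then (if x % 2 = 0 then x else 2 * n - 1 - x)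
  else if 2 * n - 2 * k ≤ x then (if x % 2 = 0 then 2 * n - 1 - x else x)
  else if x < n - l then x + l
  else if x < n then x - (n - 2 * k - l)
  else if x < n + l then x + (n - 2 * k - l)
  else x - l

lemma gf_spec (n k l x : ℕ) :
    (x < 2 * k ∧ x % 2 = 0 ∧ gf n k l x = x) ∨
    (x < 2 * k ∧ x % 2 = 1 ∧ gf n k l x = 2 * n - 1 - x) ∨
    (¬x < 2 * k ∧ 2 * n - 2 * k ≤ x ∧ x % 2 = 0 ∧ gf n k l x = 2 * n - 1 - x) ∨
    (¬x < 2 * k ∧ 2 * n - 2 * k ≤ x ∧ x % 2 = 1 ∧ gf n k l x = x) ∨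
    (¬x < 2 * k ∧ ¬2 * n - 2 * k ≤ x ∧ x < 2 * k + l ∧ gf n k l x = x + (n - 2 * k - l)) ∨
    (¬x < 2 * k ∧ ¬2 * n - 2 * k ≤ x ∧ ¬x < 2 * k + l ∧ x < n ∧ gf n k l x = x - l) ∨
    (¬x < 2 * k ∧ ¬2 * n - 2 * k ≤ x ∧ ¬x < 2 * k + l ∧ ¬x < n ∧ x < 2 * n - 2 * k - l ∧
      gf n k l x = x + l) ∨
    (¬x < 2 * k ∧ ¬2 * n - 2 * k ≤ x ∧ ¬x < 2 * k + l ∧ ¬x < n ∧ ¬x < 2 * n - 2 * k - l ∧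
      gf n k l x = x - (n - 2 * k - l)) := by
  by_cases h1 : x < 2 * k
  · by_cases h2 : x % 2 = 0
    · exact Or.inl ⟨h1, h2, by simp [gf, h1, h2]⟩
    · exact Or.inr (Or.inl ⟨h1, by omega, by simp [gf, h1, h2]⟩)
  · by_cases h2 : 2 * n - 2 * k ≤ x
    · by_cases h3 : x % 2 = 0
      · exact Or.inr (Or.inr (Or.inl ⟨h1, h2, h3, by simp [gf, h1, h2, h3]⟩))
      · exact Or.inr (Or.inr (Or.inr (Or.inl ⟨h1, h2, by omega, by simp [gf, h1, h2, h3]⟩)))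
    · by_cases h3 : x < 2 * k + l
      · exact Or.inr (Or.inr (Or.inr (Or.inr (Or.inl ⟨h1, h2, h3, by simp [gf, h1, h2, h3]⟩))))
      · by_cases h4 : x < n
        · exact Or.inr (Or.inr (Or.inr (Or.inr (Or.inr (Or.inl
            ⟨h1, h2, h3, h4, by simp [gf, h1, h2, h3, h4]⟩)))))
        · by_cases h5 : x < 2 * n - 2 * k - l
          · exact Or.inr (Or.inr (Or.inr (Or.inr (Or.inr (Or.inr (Or.inl
              ⟨h1, h2, h3, h4, h5, by simp [gf, h1, h2, h3, h4, h5]⟩))))))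
          · exact Or.inr (Or.inr (Or.inr (Or.inr (Or.inr (Or.inr (Or.inr
              ⟨h1, h2, h3, h4, h5, by simp [gf, h1, h2, h3, h4, h5]⟩))))))
lemma gif_spec (n k l x : ℕ) :
    (x < 2 * k ∧ x % 2 = 0 ∧ gif n k l x = x) ∨
    (x < 2 * k ∧ x % 2 = 1 ∧ gif n k l x = 2 * n - 1 - x) ∨
    (¬x < 2 * k ∧ 2 * n - 2 * k ≤ x ∧ x % 2 = 0 ∧ gif n k l x = 2 * n - 1 - x) ∨
    (¬x < 2 * k ∧ 2 * n - 2 * k ≤ x ∧ x % 2 = 1 ∧ gif n k l x = x) ∨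
    (¬x < 2 * k ∧ ¬2 * n - 2 * k ≤ x ∧ x < n - l ∧ gif n k l x = x + l) ∨
    (¬x < 2 * k ∧ ¬2 * n - 2 * k ≤ x ∧ ¬x < n - l ∧ x < n ∧ gif n k l x = x - (n - 2 * k - l)) ∨
    (¬x < 2 * k ∧ ¬2 * n - 2 * k ≤ x ∧ ¬x < n - l ∧ ¬x < n ∧ x < n + l ∧
      gif n k l x = x + (n - 2 * k - l)) ∨
    (¬x < 2 * k ∧ ¬2 * n - 2 * k ≤ x ∧ ¬x < n - l ∧ ¬x < n ∧ ¬x < n + l ∧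
      gif n k l x = x - l) := by
  by_cases h1 : x < 2 * k
  · by_cases h2 : x % 2 = 0
    · exact Or.inl ⟨h1, h2, by simp [gif, h1, h2]⟩
    · exact Or.inr (Or.inl ⟨h1, by omega, by simp [gif, h1, h2]⟩)
  · by_cases h2 : 2 * n - 2 * k ≤ x
    · by_cases h3 : x % 2 = 0
      · exact Or.inr (Or.inr (Or.inl ⟨h1, h2, h3, by simp [gif, h1, h2, h3]⟩))
      · exact Or.inr (Or.inr (Or.inr (Or.inl ⟨h1, h2, by omega, by simp [gif, h1, h2, h3]⟩)))
    · by_cases h3 : x < n - l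
      · exact Or.inr (Or.inr (Or.inr (Or.inr (Or.inl ⟨h1, h2, h3, by simp [gif, h1, h2, h3]⟩))))
      · by_cases h4 : x < n
        · exact Or.inr (Or.inr (Or.inr (Or.inr (Or.inr (Or.inl
            ⟨h1, h2, h3, h4, by simp [gif, h1, h2, h3, h4]⟩)))))
        · by_cases h5 : x < n + l
          · exact Or.inr (Or.inr (Or.inr (Or.inr (Or.inr (Or.inr (Or.inl
              ⟨h1, h2, h3, h4, h5, by simp [gif, h1, h2, h3, h4, h5]⟩))))))
          · exact Or.inr (Or.inr (Or.inr (Or.inr (Or.inr (Or.inr (Or.inr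
              ⟨h1, h2, h3, h4, h5, by simp [gif, h1, h2, h3, h4, h5]⟩))))))

lemma gif_gf {n k l x : ℕ} (h2 : 2 ≤ n) (hkl : 2 * k + l ≤ n) (hx : x < 2 * n) :
    gif n k l (gf n k l x) = x := by
  have h1 := gf_spec n k l x
  have h2 := gif_spec n k l (gf n k l x)
  omega
lemma cf_spec (n k l x : ℕ) :
    ((x < 2 * k ∨ 2 * n - 2 * k ≤ x) ∧ x % 2 = 0 ∧ cf n k l x = x + 1) ∨
    ((x < 2 * k ∨ 2 * n - 2 * k ≤ x) ∧ x % 2 = 1 ∧ cf n k l x = x - 1) ∨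
    (¬(x < 2 * k ∨ 2 * n - 2 * k ≤ x) ∧ (n - l ≤ x ∧ x < n + l) ∧ cf n k l x = 2 * n - 1 - x) ∨
    (¬(x < 2 * k ∨ 2 * n - 2 * k ≤ x) ∧ ¬(n - l ≤ x ∧ x < n + l) ∧ cf n k l x = x) := by
  unfold cf; split_ifs <;> omega

lemma gf_gif {n k l x : ℕ} (h2 : 2 ≤ n) (hkl : 2 * k + l ≤ n) (hx : x < 2 * n) :
    gf n k l (gif n k l x) = x := by
  have h1 := gif_spec n k l x
  have h2 := gf_spec n k l (gif n k l x)
  omega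

lemma gf_lt {n k l x : ℕ} (h2 : 2 ≤ n) (hkl : 2 * k + l ≤ n) (hx : x < 2 * n) :
    gf n k l x < 2 * n := by
  have := gf_spec n k l x; omega

lemma gif_lt {n k l x : ℕ} (h2 : 2 ≤ n) (hkl : 2 * k + l ≤ n) (hx : x < 2 * n) :
    gif n k l x < 2 * n := by
  have := gif_spec n k l x; omega

lemma E1 {n k l x : ℕ} (h2 : 2 ≤ n) (hkl : 2 * k + l ≤ n) (hx : x < 2 * n) :
    2 * n - 1 - cf n k l (2 * n - 1 - cf n k l x) = x := by
  have h1 := cf_spec n k l x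
  have h2 := cf_spec n k l (2 * n - 1 - cf n k l x)
  omega

lemma E2 {n k l x : ℕ} (h2 : 2 ≤ n) (hkl : 2 * k + l ≤ n) (hx : x < 2 * n) :
    gf n k l (2 * n - 1 - x) = 2 * n - 1 - gf n k l x := by
  have h1 := gf_spec n k l x
  have h2 := gf_spec n k l (2 * n - 1 - x)
  omega

lemma E3 {n k l x : ℕ} (h2 : 2 ≤ n) (hkl : 2 * k + l ≤ n) (hx : x < 2 * n) :
    2 * n - 1 - cf n k l (gf n k l x) = gf n k l (cf n k (n - 2 * k - l) x) := by
  have h1 := gf_spec n k l x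
  have h2 := cf_spec n k l (gf n k l x)
  have h3 := cf_spec n k (n - 2 * k - l) x
  have h4 := gf_spec n k l (cf n k (n - 2 * k - l) x)
  omega

lemma wA'_val {n : ℕ} (x : Fin (2 * n)) : (wA' n x).val = 2 * n - 1 - x.val := by
  have := x.isLt
  simp only [wA', Fin.revPerm_apply, Fin.val_rev]
  omega

def gPerm (n k l : ℕ) (h2 : 2 ≤ n) (hkl : 2 * k + l ≤ n) : Equiv.Perm (Fin (2 * n)) where
  toFun x := ⟨gf n k l x.val, gf_lt h2 hkl x.isLt⟩
  invFun x := ⟨gif n k l x.val, gif_lt h2 hkl x.isLt⟩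
  left_inv x := Fin.val_injective (gif_gf h2 hkl x.isLt)
  right_inv x := Fin.val_injective (gf_gif h2 hkl x.isLt)

lemma gPerm_val {n k l : ℕ} (h2 : 2 ≤ n) (hkl : 2 * k + l ≤ n) (x : Fin (2 * n)) :
    (gPerm n k l h2 hkl x).val = gf n k l x.val := rfl

/-- For all integers `k, l ≥ 0` with `2k + l ≤ n`, the permutation `w₀ ∘ c_{k,l}` is an
involution and is conjugate to `c_{k, n−2k−l}` by an element of the centralizer of `w₀`
in `S_{2n}`. -/
theorem stmt5 (n : ℕ) (hn : 2 ≤ n) (k l : ℕ) (hkl : 2 * k + l ≤ n) :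
    (wA' n * cA' n (by omega) k l) * (wA' n * cA' n (by omega) k l) = 1 ∧
    ∃ g : Equiv.Perm (Fin (2 * n)),
      g * wA' n = wA' n * g ∧
        wA' n * cA' n (by omega) k l = g * cA' n (by omega) k (n - 2 * k - l) * g⁻¹ := by
  have hn0 : 0 < n := by omega
  constructor
  · apply Equiv.ext
    intro x
    apply Fin.val_injective
    simp only [Equiv.Perm.mul_apply, Equiv.Perm.one_apply]
    rw [wA'_val, cA'_val n _ hn k l hkl, wA'_val, cA'_val n _ hn k l hkl]
    exact E1 hn hkl x.isLt
  · refine ⟨gPerm n k l hn hkl, ?_, ?_⟩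
    · apply Equiv.ext
      intro x
      apply Fin.val_injective
      simp only [Equiv.Perm.mul_apply]
      rw [gPerm_val, wA'_val, wA'_val, gPerm_val]
      exact E2 hn hkl x.isLt
    · rw [eq_mul_inv_iff_mul_eq]
      apply Equiv.ext
      intro x
      apply Fin.val_injective
      simp only [Equiv.Perm.mul_apply]
      rw [gPerm_val, wA'_val, cA'_val n _ hn k l hkl, gPerm_val,
        cA'_val n _ hn k (n - 2 * k - l) (by omega)]
      exact E3 hn hkl x.isLt
end
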